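/- arXiv:2108.10857 — 8 statements merged into one kernel-verified Lean document; each statement's English description precedes it below -/
import Mathlib

section
/- Let N ≥ 2 be even, κ_N = (−1)^{N/2+1}, and A_N : ℂ → ℂ defined by A_N(z) = (1/(2π)) ∫_ℝ e^{izξ − ξ^N} dξ. Then A_N satisfies the higher-order Airy equation: for every z ∈ ℂ, the (N−1)-st derivative of A_N at z equals −(κ_N/N) · z · A_N(z). -/
open MeasureTheory

open Complex Filter Set

lemma my_int_exp_neg_abs : Integrable (fun ξ : ℝ => Real.exp (-|ξ|)) := by
  have h1 : IntegrableOn (fun ξ : ℝ => Real.exp (-|ξ|)) (Iic 0) := by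
    refine (integrableOn_exp_Iic 0).congr_fun (fun x hx => ?_) measurableSet_Iic
    rw [abs_of_nonpos hx, neg_neg]
  have h2 : IntegrableOn (fun ξ : ℝ => Real.exp (-|ξ|)) (Ioi 0) := by
    refine (exp_neg_integrableOn_Ioi 0 one_pos).congr_fun (fun x hx => ?_) measurableSet_Ioi
    rw [abs_of_pos hx]; simp only [neg_one_mul]
  have := h1.union h2
  rwa [Set.Iic_union_Ioi, integrableOn_univ] at this

lemma my_aux (N k : ℕ) (hN : 2 ≤ N) (hNeven : Even N) (M : ℝ) :
    Integrable (fun ξ : ℝ => |ξ| ^ k * Real.exp (M * |ξ| - ξ ^ N)) := by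
  set c : ℝ := M + k + 1 with hc
  set C : ℝ := max 1 |c| with hC
  have hC1 : (1:ℝ) ≤ C := le_max_left _ _
  have key : ∀ t : ℝ, 0 ≤ t → c * t - t ^ N ≤ C ^ 2 := by
    intro t ht
    rcases le_total t C with h | h
    · calc c * t - t ^ N ≤ c * t := sub_le_self _ (by positivity)
        _ ≤ |c| * t := mul_le_mul_of_nonneg_right (le_abs_self c) ht
        _ ≤ C * C := mul_le_mul (le_max_right _ _) h ht (by linarith)
        _ = C ^ 2 := (sq C).symm
    · have h1 : C ≤ t := h
      have ht1 : (1:ℝ) ≤ t := le_trans hC1 h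
      have : c * t ≤ t ^ N := by
        calc c * t ≤ |c| * t := by gcongr; exact le_abs_self c
          _ ≤ t ^ (N-1) * t := by
              gcongr
              calc |c| ≤ C := le_max_right _ _
                _ = C ^ 1 := (pow_one C).symm
                _ ≤ C ^ (N-1) := pow_le_pow_right₀ hC1 (by omega)
                _ ≤ t ^ (N-1) := by gcongr
          _ = t ^ N := by rw [← pow_succ]; congr 1; omega
      nlinarith [sq_nonneg C]
  have hbd : ∀ ξ : ℝ, |ξ| ^ k * Real.exp (M * |ξ| - ξ ^ N)
      ≤ Real.exp (C^2) * Real.exp (-|ξ|) := by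
    intro ξ
    set t := |ξ| with htdef
    have ht : 0 ≤ t := abs_nonneg ξ
    have hξN : ξ ^ N = t ^ N := (hNeven.pow_abs ξ).symm
    have h1 : t ^ k ≤ Real.exp (k * t) := by
      calc t ^ k ≤ (Real.exp t) ^ k := by
            gcongr
            linarith [Real.add_one_le_exp t]
        _ = Real.exp (k * t) := by rw [← Real.exp_nat_mul]
    calc t ^ k * Real.exp (M * t - ξ ^ N)
        ≤ Real.exp (k * t) * Real.exp (M * t - t ^ N) := by rw [hξN]; gcongr
      _ = Real.exp (c * t - t ^ N - t) := by
          rw [← Real.exp_add]; congr 1; rw [hc]; push_cast; ring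
      _ ≤ Real.exp (C ^ 2 - t) := by
          apply Real.exp_le_exp.2
          have := key t ht
          linarith
      _ = Real.exp (C^2) * Real.exp (-t) := by
          rw [← Real.exp_add]; congr 1
  refine (my_int_exp_neg_abs.const_mul (Real.exp (C^2))).mono ?_ ?_
  · apply Continuous.aestronglyMeasurable
    fun_prop
  · refine Filter.Eventually.of_forall (fun ξ => ?_)
    have h1 : ‖|ξ| ^ k * Real.exp (M * |ξ| - ξ ^ N)‖ = |ξ| ^ k * Real.exp (M * |ξ| - ξ ^ N) := by
      rw [Real.norm_eq_abs, _root_.abs_of_nonneg (by positivity)]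
    have h2 : ‖Real.exp (C^2) * Real.exp (-|ξ|)‖ = Real.exp (C^2) * Real.exp (-|ξ|) := by
      rw [Real.norm_eq_abs, _root_.abs_of_nonneg (by positivity)]
    rw [h1, h2]; exact hbd ξ

lemma my_norm (z : ℂ) (k N : ℕ) (ξ : ℝ) :
    ‖(Complex.I * ξ) ^ k * Complex.exp (Complex.I * z * ξ - (ξ : ℂ) ^ N)‖
      = |ξ| ^ k * Real.exp (-z.im * ξ - ξ ^ N) := by
  rw [norm_mul, norm_pow, norm_mul, Complex.norm_I, Complex.norm_real, Real.norm_eq_abs,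
    one_mul, Complex.norm_exp]
  congr 2
  simp [Complex.sub_re, Complex.mul_re, Complex.mul_im, ← Complex.ofReal_pow]

lemma my_integrable (N k : ℕ) (hN : 2 ≤ N) (hNeven : Even N) (z : ℂ) :
    Integrable (fun ξ : ℝ => (Complex.I * ξ) ^ k *
      Complex.exp (Complex.I * z * ξ - (ξ : ℂ) ^ N)) := by
  refine (my_aux N k hN hNeven |z.im|).mono' ?_ ?_
  · apply Continuous.aestronglyMeasurable
    fun_prop
  · refine Filter.Eventually.of_forall (fun ξ => ?_)
    rw [my_norm]
    have h : -z.im * ξ - ξ ^ N ≤ |z.im| * |ξ| - ξ ^ N := by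
      have : -z.im * ξ ≤ |z.im| * |ξ| := by
        calc -z.im * ξ ≤ |(-z.im) * ξ| := le_abs_self _
          _ = |z.im| * |ξ| := by rw [abs_mul, abs_neg]
      linarith
    exact mul_le_mul_of_nonneg_left (Real.exp_le_exp.2 h) (by positivity)


lemma my_ptderiv (N k : ℕ) (ξ : ℝ) (x : ℂ) :
    HasDerivAt (fun x : ℂ => (Complex.I * ξ) ^ k * Complex.exp (Complex.I * x * ξ - (ξ : ℂ) ^ N))
      ((Complex.I * ξ) ^ (k + 1) * Complex.exp (Complex.I * x * ξ - (ξ : ℂ) ^ N)) x := by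
  have h1 : HasDerivAt (fun x : ℂ => Complex.I * x * ξ - (ξ : ℂ) ^ N) (Complex.I * ξ) x := by
    simpa using (((hasDerivAt_id x).const_mul Complex.I).mul_const ((ξ : ℂ))).sub_const ((ξ : ℂ) ^ N)
  have h3 := h1.cexp.const_mul ((Complex.I * ξ) ^ k)
  exact h3.congr_deriv (by rw [pow_succ]; ring)

lemma my_hasDeriv (N k : ℕ) (hN : 2 ≤ N) (hNeven : Even N) (z₀ : ℂ) :
    HasDerivAt
      (fun z : ℂ => ∫ ξ : ℝ, (Complex.I * ξ) ^ k * Complex.exp (Complex.I * z * ξ - (ξ : ℂ) ^ N))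
      (∫ ξ : ℝ, (Complex.I * ξ) ^ (k + 1) * Complex.exp (Complex.I * z₀ * ξ - (ξ : ℂ) ^ N)) z₀ := by
  have H := hasDerivAt_integral_of_dominated_loc_of_deriv_le
    (F := fun (x : ℂ) (ξ : ℝ) => (Complex.I * ξ) ^ k * Complex.exp (Complex.I * x * ξ - (ξ : ℂ) ^ N))
    (F' := fun (x : ℂ) (ξ : ℝ) => (Complex.I * ξ) ^ (k + 1) * Complex.exp (Complex.I * x * ξ - (ξ : ℂ) ^ N))
    (x₀ := z₀) (bound := fun ξ : ℝ => |ξ| ^ (k + 1) * Real.exp ((|z₀.im| + 1) * |ξ| - ξ ^ N))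
    (s := Metric.ball z₀ 1) (Metric.ball_mem_nhds z₀ one_pos)
    (Filter.Eventually.of_forall fun x => (by fun_prop : Continuous
      (fun ξ : ℝ => (Complex.I * ξ) ^ k * Complex.exp (Complex.I * x * ξ - (ξ : ℂ) ^ N))).aestronglyMeasurable)
    (my_integrable N k hN hNeven z₀)
    ((by fun_prop : Continuous
      (fun ξ : ℝ => (Complex.I * ξ) ^ (k + 1) * Complex.exp (Complex.I * z₀ * ξ - (ξ : ℂ) ^ N))).aestronglyMeasurable)
    ?_ (my_aux N (k + 1) hN hNeven (|z₀.im| + 1))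
    (Filter.Eventually.of_forall fun ξ x _ => my_ptderiv N k ξ x)
  · exact H.2
  · refine Filter.Eventually.of_forall fun ξ x hx => ?_
    rw [my_norm]
    have him : |x.im| ≤ |z₀.im| + 1 := by
      have h1 : |x.im - z₀.im| ≤ ‖x - z₀‖ := by
        simpa [Complex.sub_im] using Complex.abs_im_le_norm (x - z₀)
      have h2 : ‖x - z₀‖ < 1 := by rwa [Metric.mem_ball, Complex.dist_eq] at hx
      have := abs_sub_abs_le_abs_sub x.im z₀.im
      linarith
    have h : -x.im * ξ - ξ ^ N ≤ (|z₀.im| + 1) * |ξ| - ξ ^ N := by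
      have h1 : -x.im * ξ ≤ |x.im| * |ξ| := by
        calc -x.im * ξ ≤ |(-x.im) * ξ| := le_abs_self _
          _ = |x.im| * |ξ| := by rw [abs_mul, abs_neg]
      have h2 : |x.im| * |ξ| ≤ (|z₀.im| + 1) * |ξ| := mul_le_mul_of_nonneg_right him (abs_nonneg ξ)
      linarith
    exact mul_le_mul_of_nonneg_left (Real.exp_le_exp.2 h) (by positivity)

lemma my_norm' (z : ℂ) (k N : ℕ) (ξ : ℝ) :
    ‖((ξ : ℂ)) ^ k * Complex.exp (Complex.I * z * ξ - (ξ : ℂ) ^ N)‖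
      = |ξ| ^ k * Real.exp (-z.im * ξ - ξ ^ N) := by
  have hre : (Complex.I * z * ξ - (ξ : ℂ) ^ N).re = -z.im * ξ - ξ ^ N := by
    simp [Complex.sub_re, Complex.mul_re, Complex.mul_im, ← Complex.ofReal_pow]
  rw [norm_mul, norm_pow, Complex.norm_real, Real.norm_eq_abs,
    Complex.norm_exp, hre]

lemma my_integrable' (N k : ℕ) (hN : 2 ≤ N) (hNeven : Even N) (z : ℂ) :
    Integrable (fun ξ : ℝ => ((ξ : ℂ)) ^ k *
      Complex.exp (Complex.I * z * ξ - (ξ : ℂ) ^ N)) := by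
  refine (my_aux N k hN hNeven |z.im|).mono' ?_ ?_
  · apply Continuous.aestronglyMeasurable
    fun_prop
  · refine Filter.Eventually.of_forall (fun ξ => ?_)
    rw [my_norm']
    have h : -z.im * ξ - ξ ^ N ≤ |z.im| * |ξ| - ξ ^ N := by
      have : -z.im * ξ ≤ |z.im| * |ξ| := by
        calc -z.im * ξ ≤ |(-z.im) * ξ| := le_abs_self _
          _ = |z.im| * |ξ| := by rw [abs_mul, abs_neg]
      linarith
    exact mul_le_mul_of_nonneg_left (Real.exp_le_exp.2 h) (by positivity)

lemma my_xideriv (N : ℕ) (z : ℂ) (ξ : ℝ) :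
    HasDerivAt (fun ξ : ℝ => Complex.exp (Complex.I * z * ξ - (ξ : ℂ) ^ N))
      ((Complex.I * z - N * (ξ : ℂ) ^ (N - 1)) *
        Complex.exp (Complex.I * z * ξ - (ξ : ℂ) ^ N)) ξ := by
  have h0 : HasDerivAt (fun ξ : ℝ => ((ξ : ℝ) : ℂ)) 1 ξ := by
    have h := Complex.ofRealCLM.hasDerivAt (x := ξ)
    simp only [Complex.ofRealCLM_apply, Complex.ofReal_one] at h
    exact h
  have h1 : HasDerivAt (fun ξ : ℝ => Complex.I * z * ξ - (ξ : ℂ) ^ N)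
      (Complex.I * z - N * (ξ : ℂ) ^ (N - 1)) ξ := by
    have ha := h0.const_mul (Complex.I * z)
    have hb : HasDerivAt (fun y : ℝ => ((y : ℂ)) ^ N) ((N : ℂ) * (ξ : ℂ) ^ (N - 1)) ξ :=
      (hasDerivAt_pow N ((ξ : ℝ) : ℂ)).comp_ofReal
    have h := ha.sub hb
    simp only [mul_one] at h
    exact h
  simpa [mul_comm] using h1.cexp

lemma my_ibp (N : ℕ) (hN : 2 ≤ N) (hNeven : Even N) (z : ℂ) :
    ∫ ξ : ℝ, (Complex.I * z - N * (ξ : ℂ) ^ (N - 1)) *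
      Complex.exp (Complex.I * z * ξ - (ξ : ℂ) ^ N) = 0 := by
  set f : ℝ → ℂ := fun ξ => Complex.exp (Complex.I * z * ξ - (ξ : ℂ) ^ N) with hf
  set f' : ℝ → ℂ := fun ξ => (Complex.I * z - N * (ξ : ℂ) ^ (N - 1)) * f ξ with hf'
  have hi : Integrable f' := by
    have h1 := (my_integrable' N 0 hN hNeven z).const_mul (Complex.I * z)
    have h2 := (my_integrable' N (N - 1) hN hNeven z).const_mul ((N : ℂ))
    refine (h1.sub h2).congr (Filter.Eventually.of_forall fun ξ => ?_)
    simp only [hf', hf, pow_zero, one_mul, Pi.sub_apply]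
    ring
  have hlim : Filter.Tendsto f (Filter.cocompact ℝ) (nhds 0) := by
    rw [tendsto_zero_iff_norm_tendsto_zero]
    have hnorm : ∀ ξ : ℝ, ‖f ξ‖ = Real.exp (-z.im * ξ - ξ ^ N) := by
      intro ξ
      have := my_norm' z 0 N ξ
      simpa [hf] using this
    simp only [hnorm]
    refine Real.tendsto_exp_atBot.comp ?_
    set T : ℝ := max 1 (|z.im| + 1) with hT
    have hT1 : (1 : ℝ) ≤ T := le_max_left _ _
    refine Filter.tendsto_atBot_mono' _ ?_
      ((Filter.tendsto_neg_atBot_iff.2 tendsto_norm_cocompact_atTop))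
    · filter_upwards [tendsto_norm_cocompact_atTop.eventually_ge_atTop T] with ξ hξ
      have ht : T ≤ |ξ| := by simpa [Real.norm_eq_abs] using hξ
      have hpow : (|z.im| + 1) * |ξ| ≤ ξ ^ N := by
        rw [← hNeven.pow_abs]
        calc (|z.im| + 1) * |ξ| ≤ |ξ| ^ (N - 1) * |ξ| := by
              gcongr
              calc |z.im| + 1 ≤ T := le_max_right _ _
                _ = T ^ 1 := (pow_one T).symm
                _ ≤ T ^ (N - 1) := pow_le_pow_right₀ hT1 (by omega)
                _ ≤ |ξ| ^ (N - 1) := by gcongr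
          _ = |ξ| ^ N := by rw [← pow_succ]; congr 1; omega
      have h1 : -z.im * ξ ≤ |z.im| * |ξ| := by
        calc -z.im * ξ ≤ |(-z.im) * ξ| := le_abs_self _
          _ = |z.im| * |ξ| := by rw [abs_mul, abs_neg]
      have : -z.im * ξ - ξ ^ N ≤ -|ξ| := by nlinarith [abs_nonneg ξ]
      simpa [Real.norm_eq_abs] using this
  have hco : Filter.cocompact ℝ = Filter.atBot ⊔ Filter.atTop := cocompact_eq_atBot_atTop
  have hlimTop : Filter.Tendsto f Filter.atTop (nhds 0) :=
    hlim.mono_left (by rw [hco]; exact le_sup_right)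
  have hlimBot : Filter.Tendsto f Filter.atBot (nhds 0) :=
    hlim.mono_left (by rw [hco]; exact le_sup_left)
  have hderiv : ∀ x : ℝ, HasDerivAt f (f' x) x := fun x => my_xideriv N z x
  have hIic := integral_Iic_of_hasDerivAt_of_tendsto' (a := (0:ℝ))
    (fun x _ => hderiv x) hi.integrableOn hlimBot
  have hIoi := integral_Ioi_of_hasDerivAt_of_tendsto' (a := (0:ℝ))
    (fun x _ => hderiv x) hi.integrableOn hlimTop
  have htot := intervalIntegral.integral_Iic_add_Ioi (b := (0:ℝ)) hi.integrableOn hi.integrableOn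
  calc ∫ ξ : ℝ, f' ξ = (∫ ξ in Iic (0:ℝ), f' ξ) + ∫ ξ in Ioi (0:ℝ), f' ξ := htot.symm
    _ = 0 := by rw [hIic, hIoi]; ring

/-- For even `N ≥ 2` and `κ_N = (-1)^{N/2+1}`, the Airy-type function
`A_N(z) = (1/(2π)) ∫_ℝ exp (I z ξ - ξ^N) dξ` satisfies the higher-order Airy equation
`A_N^{(N-1)}(z) = -(κ_N / N) z A_N(z)`. -/
theorem stmt_1 (N : ℕ) (hN : 2 ≤ N) (hNeven : Even N)
    (κ : ℝ) (hκ : κ = (-1 : ℝ) ^ (N / 2 + 1))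
    (A : ℂ → ℂ)
    (hA : ∀ z : ℂ, A z = (1 / (2 * Real.pi) : ℂ) *
      ∫ ξ : ℝ, Complex.exp (Complex.I * z * ξ - (ξ : ℂ) ^ N)) :
    ∀ z : ℂ, iteratedDeriv (N - 1) A z = -((κ : ℂ) / (N : ℂ)) * z * A z := by
  intro z
  have hNne : (N : ℂ) ≠ 0 := Nat.cast_ne_zero.2 (by omega)
  set c : ℂ := (1 / (2 * Real.pi) : ℂ) with hcdef
  have hiter : ∀ n : ℕ, ∀ w : ℂ, iteratedDeriv n A w
      = c * ∫ ξ : ℝ, (Complex.I * ξ) ^ n * Complex.exp (Complex.I * w * ξ - (ξ : ℂ) ^ N) := by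
    intro n
    induction n with
    | zero =>
      intro w
      simp only [iteratedDeriv_zero, pow_zero, one_mul]
      exact hA w
    | succ n ih =>
      intro w
      rw [iteratedDeriv_succ, funext ih]
      exact (HasDerivAt.deriv ((my_hasDeriv N n hN hNeven w).const_mul c))
  have hz := hiter (N - 1) z
  set E : ℂ := ∫ ξ : ℝ, Complex.exp (Complex.I * z * ξ - (ξ : ℂ) ^ N) with hE
  set E1 : ℂ := ∫ ξ : ℝ, ((ξ : ℂ)) ^ (N - 1) * Complex.exp (Complex.I * z * ξ - (ξ : ℂ) ^ N)
    with hE1def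
  have h1 := (my_integrable' N 0 hN hNeven z).const_mul (Complex.I * z)
  have h2 := (my_integrable' N (N - 1) hN hNeven z).const_mul ((N : ℂ))
  have hkey : (N : ℂ) * E1 = Complex.I * z * E := by
    have h0 := my_ibp N hN hNeven z
    have hcongr : (∫ ξ : ℝ, (Complex.I * z - N * (ξ : ℂ) ^ (N - 1)) *
          Complex.exp (Complex.I * z * ξ - (ξ : ℂ) ^ N))
        = (∫ ξ : ℝ, Complex.I * z * (((ξ : ℂ)) ^ 0 * Complex.exp (Complex.I * z * ξ - (ξ : ℂ) ^ N)))
          - ∫ ξ : ℝ, (N : ℂ) * (((ξ : ℂ)) ^ (N - 1) * Complex.exp (Complex.I * z * ξ - (ξ : ℂ) ^ N)) := by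
      rw [← integral_sub h1 h2]
      refine integral_congr_ae (Filter.Eventually.of_forall fun ξ => ?_)
      simp only [pow_zero, one_mul, Pi.sub_apply]
      ring
    rw [hcongr, integral_const_mul, integral_const_mul] at h0
    simp only [pow_zero, one_mul] at h0
    rw [← hE, ← hE1def] at h0
    linear_combination -h0
  have hIpull : (∫ ξ : ℝ, (Complex.I * ξ) ^ (N - 1) *
      Complex.exp (Complex.I * z * ξ - (ξ : ℂ) ^ N)) = Complex.I ^ (N - 1) * E1 := by
    rw [hE1def, ← integral_const_mul]
    refine integral_congr_ae (Filter.Eventually.of_forall fun ξ => ?_)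
    simp only [mul_pow]
    ring
  obtain ⟨m, hm⟩ := hNeven
  have hm2 : N / 2 = m := by omega
  have hIN : Complex.I ^ N = (-1 : ℂ) ^ m := by
    rw [hm, pow_add, ← mul_pow, Complex.I_mul_I]
  have hκ' : -((κ : ℂ)) = (-1 : ℂ) ^ m := by
    rw [hκ, hm2]; push_cast; ring
  have hNsucc : (N - 1) + 1 = N := by omega
  have hII : Complex.I ^ (N - 1) * Complex.I = -((κ : ℂ)) := by
    rw [← pow_succ, hNsucc, hIN, hκ']
  rw [hz, hIpull, hA z, ← hE]
  have hE1eq : E1 = Complex.I * z * E / N := by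
    field_simp
    linear_combination hkey
  rw [hE1eq]
  calc c * (Complex.I ^ (N - 1) * (Complex.I * z * E / N))
      = (Complex.I ^ (N - 1) * Complex.I) * (c * z * E) / N := by ring
    _ = -((κ : ℂ)) * (c * z * E) / N := by rw [hII]
    _ = -((κ : ℂ) / (N : ℂ)) * z * (c * E) := by ring
end

section
/- Let N ≥ 3 be odd and κ_N = (−1)^{(N+1)/2}. For every z ∈ ℂ and every real c > 0, the function s ↦ e^{z(c+is) + κ_N (c+is)^N} is integrable on ℝ, and the value (1/(2π)) ∫_ℝ e^{z(c+is) + κ_N (c+is)^N} ds does not depend on the choice of c > 0. -/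
open MeasureTheory Complex Finset

lemma choose_le_two_pow' (N j : ℕ) : (N.choose j : ℝ) ≤ 2 ^ N := by
  have : N.choose j ≤ 2 ^ N := by
    rcases le_or_gt j N with h | h
    · calc N.choose j ≤ ∑ i ∈ Finset.range (N + 1), N.choose i :=
          Finset.single_le_sum (fun i _ => Nat.zero_le _)
            (Finset.mem_range.mpr (Nat.lt_succ_of_le h))
      _ = 2 ^ N := Nat.sum_range_choose N
    · simp [Nat.choose_eq_zero_of_lt h]
  exact_mod_cast this

lemma key_bound (N m : ℕ) (hm : N = 2 * m + 1) (hm1 : 1 ≤ m) (κ : ℂ)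
    (hκ : κ = (-1 : ℂ) ^ (m + 1)) (z : ℂ) (a b : ℝ) (ha : 0 < a) (hab : a ≤ b) :
    ∃ S : ℝ, 1 ≤ S ∧ ∀ x s : ℝ, a ≤ x → x ≤ b → S ≤ |s| →
      ‖Complex.exp (z * ((x : ℂ) + (s : ℂ) * Complex.I) +
        κ * ((x : ℂ) + (s : ℂ) * Complex.I) ^ N)‖ ≤
        Real.exp (-(N * a / 2) * s ^ 2) := by
  have hN1 : 1 ≤ N := by omega
  set M : ℝ := max b 1 with hM
  have hM1 : 1 ≤ M := le_max_right _ _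
  have hbM : b ≤ M := le_max_left _ _
  have hM0 : 0 < M := lt_of_lt_of_le one_pos hM1
  set C : ℝ := N * (2 ^ N * M ^ N) with hC
  have hC0 : 0 ≤ C := by positivity
  set D : ℝ := ‖z‖ * M + ‖z‖ + C with hD
  have hz0 : 0 ≤ ‖z‖ := norm_nonneg z
  have hD0 : 0 ≤ D := by positivity
  have hNa : (0 : ℝ) < N * a := by
    have : (0:ℝ) < N := by exact_mod_cast Nat.pos_of_ne_zero (by omega)
    positivity
  refine ⟨max 1 (2 * D / (N * a)), le_max_left _ _, ?_⟩
  intro x s hax hxb hSs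
  have hs1 : 1 ≤ |s| := le_trans (le_max_left _ _) hSs
  have hsD : 2 * D ≤ N * a * |s| := by
    have h2 : 2 * D / (N * a) ≤ |s| := le_trans (le_max_right _ _) hSs
    calc 2 * D = 2 * D / (N * a) * (N * a) := by field_simp
      _ ≤ |s| * (N * a) := mul_le_mul_of_nonneg_right h2 hNa.le
      _ = N * a * |s| := by ring
  have hx0 : 0 < x := lt_of_lt_of_le ha hax
  -- powers of I
  have hIN : Complex.I ^ N = (-1 : ℂ) ^ m * Complex.I := by
    rw [hm, pow_succ, pow_mul, Complex.I_sq]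
  have hIN1 : Complex.I ^ (N - 1) = (-1 : ℂ) ^ m := by
    have : N - 1 = 2 * m := by omega
    rw [this, pow_mul, Complex.I_sq]
  have hneg : ((-1 : ℂ)) ^ (m + 1) * (-1 : ℂ) ^ m = -1 := by
    rw [← pow_add]
    exact Odd.neg_one_pow ⟨m, by ring⟩
  have hI1 : κ * ((s : ℂ) * Complex.I) ^ N = -((s : ℂ) ^ N * Complex.I) := by
    rw [hκ, mul_pow, hIN]
    calc (-1 : ℂ) ^ (m+1) * ((s:ℂ)^N * ((-1:ℂ)^m * Complex.I))
        = ((-1:ℂ)^(m+1) * (-1:ℂ)^m) * ((s:ℂ)^N * Complex.I) := by ring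
      _ = -((s : ℂ) ^ N * Complex.I) := by rw [hneg]; ring
  have hI2 : κ * ((s : ℂ) * Complex.I) ^ (N - 1) = -((s : ℂ) ^ (N - 1)) := by
    rw [hκ, mul_pow, hIN1]
    calc (-1 : ℂ) ^ (m+1) * ((s:ℂ)^(N-1) * (-1:ℂ)^m)
        = ((-1:ℂ)^(m+1) * (-1:ℂ)^m) * (s:ℂ)^(N-1) := by ring
      _ = -((s : ℂ) ^ (N-1)) := by rw [hneg]; ring
  -- binomial expansion
  set g : ℕ → ℂ := fun k => (x:ℂ) ^ k * ((s:ℂ) * Complex.I) ^ (N - k) * (N.choose k : ℂ) with hg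
  set E : ℂ := ∑ k ∈ Finset.range (N - 1), g (k + 2) with hE
  have hexp : ((x : ℂ) + (s : ℂ) * Complex.I) ^ N =
      E + (x:ℂ) * ((s:ℂ) * Complex.I) ^ (N-1) * N + ((s:ℂ) * Complex.I) ^ N := by
    have h1 : ((x : ℂ) + (s : ℂ) * Complex.I) ^ N = ∑ k ∈ Finset.range (N + 1), g k :=
      add_pow _ _ _
    have hN2 : N + 1 = (N - 1) + 1 + 1 := by omega
    rw [h1, hN2, Finset.sum_range_succ' g (N - 1 + 1),
      Finset.sum_range_succ' (fun k => g (k + 1)) (N - 1)]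
    have hg0 : g 0 = ((s:ℂ) * Complex.I) ^ N := by simp [hg]
    have hg1 : g 1 = (x:ℂ) * ((s:ℂ) * Complex.I) ^ (N-1) * N := by
      simp [hg, Nat.choose_one_right]
    rw [hg0, hg1]
  -- real part of the main terms
  have hre_main : (κ * ((x:ℂ) * ((s:ℂ) * Complex.I) ^ (N-1) * N)
      + κ * ((s:ℂ) * Complex.I) ^ N).re = -(N * x * s ^ (N-1)) := by
    have h : κ * ((x:ℂ) * ((s:ℂ) * Complex.I) ^ (N-1) * N) + κ * ((s:ℂ) * Complex.I) ^ N
        = ((-(N * x * s ^ (N-1)) : ℝ) : ℂ) + ((-(s ^ N) : ℝ) : ℂ) * Complex.I := by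
      have e1 : κ * ((x:ℂ) * ((s:ℂ) * Complex.I) ^ (N-1) * N)
          = (x:ℂ) * (N:ℂ) * (κ * ((s:ℂ) * Complex.I) ^ (N-1)) := by ring
      rw [e1, hI2, hI1]
      push_cast
      ring
    rw [h, Complex.add_re, Complex.ofReal_re, Complex.mul_re, Complex.I_re, Complex.I_im,
      Complex.ofReal_re, Complex.ofReal_im]
    ring
  -- bound on the error term
  have hEbound : ‖E‖ ≤ C * |s| ^ (N - 2) := by
    have hterm : ∀ k ∈ Finset.range (N - 1), ‖g (k + 2)‖ ≤ M ^ N * |s| ^ (N - 2) * 2 ^ N := by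
      intro k hk
      have hk' : k + 2 ≤ N := by
        have := Finset.mem_range.mp hk; omega
      have hnorm : ‖g (k + 2)‖ = x ^ (k+2) * |s| ^ (N - (k+2)) * N.choose (k+2) := by
        simp [hg, norm_mul, norm_pow, Complex.norm_real, Complex.norm_I,
          mul_one, Complex.norm_natCast, Real.norm_eq_abs, _root_.abs_of_nonneg hx0.le]
      rw [hnorm]
      have h1 : x ^ (k+2) ≤ M ^ N := by
        calc x ^ (k+2) ≤ M ^ (k+2) := pow_le_pow_left₀ hx0.le (le_trans hxb hbM) _
          _ ≤ M ^ N := pow_le_pow_right₀ hM1 hk'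
      have h2 : |s| ^ (N - (k+2)) ≤ |s| ^ (N - 2) := pow_le_pow_right₀ hs1 (by omega)
      have h3 : (N.choose (k+2) : ℝ) ≤ 2 ^ N := choose_le_two_pow' N (k+2)
      have hp1 : (0:ℝ) ≤ x ^ (k+2) := by positivity
      have hp2 : (0:ℝ) ≤ |s| ^ (N - (k+2)) := by positivity
      exact mul_le_mul (mul_le_mul h1 h2 hp2 (by positivity)) h3 (Nat.cast_nonneg _)
        (by positivity)
    rw [hE]
    calc ‖∑ k ∈ Finset.range (N - 1), g (k + 2)‖ ≤ ∑ k ∈ Finset.range (N - 1), ‖g (k + 2)‖ := norm_sum_le _ _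
      _ ≤ ∑ _k ∈ Finset.range (N - 1), M ^ N * |s| ^ (N - 2) * 2 ^ N :=
          Finset.sum_le_sum hterm
      _ = (N - 1 : ℕ) * (M ^ N * |s| ^ (N - 2) * 2 ^ N) := by
          rw [Finset.sum_const, Finset.card_range, nsmul_eq_mul]
      _ ≤ N * (M ^ N * |s| ^ (N - 2) * 2 ^ N) := by
          apply mul_le_mul_of_nonneg_right _ (by positivity)
          exact_mod_cast Nat.cast_le.mpr (Nat.sub_le N 1)
      _ = C * |s| ^ (N - 2) := by rw [hC]; ring
  -- real part of the whole exponent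
  set W : ℂ := z * ((x : ℂ) + (s : ℂ) * Complex.I) +
      κ * ((x : ℂ) + (s : ℂ) * Complex.I) ^ N with hW
  have hWre : W.re ≤ ‖z‖ * (M + |s|) + C * |s| ^ (N-2) - N * x * s ^ (N-1) := by
    have hsplit : W = z * ((x : ℂ) + (s : ℂ) * Complex.I) + κ * E +
        (κ * ((x:ℂ) * ((s:ℂ) * Complex.I) ^ (N-1) * N) + κ * ((s:ℂ) * Complex.I) ^ N) := by
      rw [hW, hexp]; ring
    rw [hsplit, Complex.add_re, Complex.add_re, hre_main]
    have h1 : (z * ((x : ℂ) + (s : ℂ) * Complex.I)).re ≤ ‖z‖ * (M + |s|) := by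
      refine le_trans (Complex.re_le_norm _) ?_
      rw [norm_mul]
      apply mul_le_mul_of_nonneg_left _ hz0
      calc ‖(x : ℂ) + (s : ℂ) * Complex.I‖
          ≤ ‖(x : ℂ)‖ + ‖(s : ℂ) * Complex.I‖ :=
            norm_add_le _ _
        _ = |x| + |s| := by simp [norm_mul]
        _ ≤ M + |s| := by
            have : |x| = x := _root_.abs_of_nonneg hx0.le
            linarith [le_trans hxb hbM]
    have h2 : (κ * E).re ≤ C * |s| ^ (N-2) := by
      refine le_trans (Complex.re_le_norm _) ?_
      rw [norm_mul, hκ]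
      simp only [norm_pow, norm_neg, norm_one, one_pow, one_mul]
      exact hEbound
    linarith
  -- final arithmetic
  set p : ℝ := |s| with hp
  have hp0 : 0 < p := lt_of_lt_of_le one_pos hs1
  have hxp : N * a * s ^ (N-1) ≤ N * x * s ^ (N-1) := by
    have hsp : 0 ≤ s ^ (N-1) := by
      rw [← Even.pow_abs ⟨m, by omega⟩]
      positivity
    have h' := mul_le_mul_of_nonneg_left (mul_le_mul_of_nonneg_right hax hsp)
      (Nat.cast_nonneg N : (0:ℝ) ≤ N)
    nlinarith [h']
  have heven : p ^ (N-1) = s ^ (N-1) := Even.pow_abs ⟨m, by omega⟩ s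
  have e1 : p ^ (N-1) = p * p ^ (N-2) := by
    rw [← pow_succ']
    congr 1
    omega
  have e2 : p ^ 2 ≤ p ^ (N-1) := pow_le_pow_right₀ hs1 (by omega)
  have e3 : p ≤ p ^ (N-2) := by
    calc p = p ^ 1 := (pow_one p).symm
      _ ≤ p ^ (N-2) := pow_le_pow_right₀ hs1 (by omega)
  have e4 : (1:ℝ) ≤ p ^ (N-2) := one_le_pow₀ hs1
  have hppos : (0:ℝ) ≤ p ^ (N-2) := by positivity
  have hfinal : W.re ≤ -(N * a / 2) * s ^ 2 := by
    have hDp : D * p ^ (N-2) ≤ N * a / 2 * p ^ (N-1) := by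
      rw [e1]
      calc D * p ^ (N-2) ≤ (N * a / 2 * p) * p ^ (N-2) := by
            apply mul_le_mul_of_nonneg_right _ hppos
            linarith
        _ = N * a / 2 * (p * p ^ (N-2)) := by ring
    have hup : ‖z‖ * (M + p) + C * p ^ (N-2) ≤ D * p ^ (N-2) := by
      have t1 : ‖z‖ * M ≤ ‖z‖ * M * p ^ (N-2) := by
        calc ‖z‖ * M = ‖z‖ * M * 1 := (mul_one _).symm
          _ ≤ ‖z‖ * M * p ^ (N-2) :=
              mul_le_mul_of_nonneg_left e4 (by positivity)
      have t2 : ‖z‖ * p ≤ ‖z‖ * p ^ (N-2) :=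
        mul_le_mul_of_nonneg_left e3 hz0
      have hx : D * p ^ (N-2) = ‖z‖ * M * p ^ (N-2) +
          ‖z‖ * p ^ (N-2) + C * p ^ (N-2) := by rw [hD]; ring
      have hlhs : ‖z‖ * (M + p) = ‖z‖ * M + ‖z‖ * p := by ring
      rw [hx, hlhs]
      linarith
    have hsq : N * a / 2 * p ^ 2 ≤ N * a / 2 * p ^ (N-1) :=
      mul_le_mul_of_nonneg_left e2 (by positivity)
    have hps : p ^ 2 = s ^ 2 := sq_abs s
    calc W.re ≤ ‖z‖ * (M + p) + C * p ^ (N-2) - N * x * s ^ (N-1) := hWre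
      _ ≤ D * p ^ (N-2) - N * a * s ^ (N-1) := by linarith
      _ = D * p ^ (N-2) - N * a * p ^ (N-1) := by rw [heven]
      _ ≤ N * a / 2 * p ^ (N-1) - N * a * p ^ (N-1) := by linarith
      _ = -(N * a / 2) * p ^ (N-1) := by ring
      _ ≤ -(N * a / 2) * p ^ 2 := by linarith
      _ = -(N * a / 2) * s ^ 2 := by rw [hps]
  calc ‖Complex.exp W‖ = Real.exp W.re := by
        simp [Complex.norm_exp]
    _ ≤ Real.exp (-(N * a / 2) * s ^ 2) := Real.exp_le_exp.mpr hfinal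

lemma entire_aux (N : ℕ) (κ z : ℂ) :
    Differentiable ℂ (fun ξ : ℂ => Complex.exp (z * ξ + κ * ξ ^ N)) := by
  apply Differentiable.cexp
  exact (differentiable_id.const_mul z).add ((differentiable_pow N).const_mul κ)

lemma cont_aux (N : ℕ) (κ z : ℂ) (c : ℝ) :
    Continuous (fun s : ℝ => Complex.exp (z * ((c : ℂ) + (s : ℂ) * Complex.I) +
      κ * ((c : ℂ) + (s : ℂ) * Complex.I) ^ N)) := by
  have h : Continuous (fun s : ℝ => (c : ℂ) + (s : ℂ) * Complex.I) := by continuity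
  exact (entire_aux N κ z).continuous.comp h

lemma integrable_line (N m : ℕ) (hm : N = 2 * m + 1) (hm1 : 1 ≤ m) (κ : ℂ)
    (hκ : κ = (-1 : ℂ) ^ (m + 1)) (z : ℂ) (c : ℝ) (hc : 0 < c) :
    Integrable (fun s : ℝ => Complex.exp (z * ((c : ℂ) + (s : ℂ) * Complex.I) +
      κ * ((c : ℂ) + (s : ℂ) * Complex.I) ^ N)) := by
  obtain ⟨S, hS1, hS⟩ := key_bound N m hm hm1 κ hκ z c c hc le_rfl
  set f : ℝ → ℂ := fun s => Complex.exp (z * ((c : ℂ) + (s : ℂ) * Complex.I) +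
      κ * ((c : ℂ) + (s : ℂ) * Complex.I) ^ N) with hf
  have hcont : Continuous f := cont_aux N κ z c
  obtain ⟨K, hK⟩ := (isCompact_Icc : IsCompact (Set.Icc (-S) S)).exists_bound_of_continuousOn
    hcont.continuousOn
  have hS0 : 0 < S := lt_of_lt_of_le one_pos hS1
  have hK0 : 0 ≤ K := le_trans (norm_nonneg _) (hK 0 (Set.mem_Icc.mpr ⟨by linarith, hS0.le⟩))
  set k : ℝ := N * c / 2 with hk
  have hkpos : 0 < k := by
    have hN0 : (0:ℝ) < N := by
      have : 0 < N := by omega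
      exact_mod_cast this
    rw [hk]; positivity
  set K' : ℝ := max (K * Real.exp (k * S ^ 2)) 1 with hK'
  have hb : ∀ s : ℝ, ‖f s‖ ≤ K' * Real.exp (-k * s ^ 2) := by
    intro s
    rcases le_or_gt |s| S with hle | hlt
    · have hmem : s ∈ Set.Icc (-S) S := by
        rcases abs_le.mp hle with ⟨h1, h2⟩
        exact Set.mem_Icc.mpr ⟨h1, h2⟩
      have h1 : s ^ 2 ≤ S ^ 2 := by nlinarith [_root_.sq_abs s, _root_.abs_nonneg s]
      have h2 : Real.exp (-(k * S ^ 2)) ≤ Real.exp (-(k * s ^ 2)) :=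
        Real.exp_le_exp.mpr (by nlinarith)
      calc ‖f s‖ ≤ K := hK s hmem
        _ = K * Real.exp (k * S ^ 2) * Real.exp (-(k * S ^ 2)) := by
            rw [mul_assoc, ← Real.exp_add]; simp
        _ ≤ K * Real.exp (k * S ^ 2) * Real.exp (-(k * s ^ 2)) :=
            mul_le_mul_of_nonneg_left h2 (by positivity)
        _ ≤ K' * Real.exp (-(k * s ^ 2)) :=
            mul_le_mul_of_nonneg_right (le_max_left _ _) (Real.exp_nonneg _)
        _ = K' * Real.exp (-k * s ^ 2) := by rw [neg_mul]
    · have := hS c s le_rfl le_rfl hlt.le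
      calc ‖f s‖ ≤ Real.exp (-(N * c / 2) * s ^ 2) := this
        _ = 1 * Real.exp (-k * s ^ 2) := by rw [one_mul, hk]
        _ ≤ K' * Real.exp (-k * s ^ 2) :=
            mul_le_mul_of_nonneg_right (le_max_right _ _) (Real.exp_nonneg _)
  exact ((integrable_exp_neg_mul_sq hkpos).const_mul K').mono' hcont.aestronglyMeasurable
    (Filter.Eventually.of_forall hb)

lemma line_integral_eq (N m : ℕ) (hm : N = 2 * m + 1) (hm1 : 1 ≤ m) (κ : ℂ)
    (hκ : κ = (-1 : ℂ) ^ (m + 1)) (z : ℂ) (c₁ c₂ : ℝ) (h1 : 0 < c₁) (h12 : c₁ ≤ c₂) :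
    (∫ s : ℝ, Complex.exp (z * ((c₁ : ℂ) + (s : ℂ) * Complex.I) +
        κ * ((c₁ : ℂ) + (s : ℂ) * Complex.I) ^ N)) =
      ∫ s : ℝ, Complex.exp (z * ((c₂ : ℂ) + (s : ℂ) * Complex.I) +
        κ * ((c₂ : ℂ) + (s : ℂ) * Complex.I) ^ N) := by
  have h2 : 0 < c₂ := lt_of_lt_of_le h1 h12
  set f : ℂ → ℂ := fun ξ => Complex.exp (z * ξ + κ * ξ ^ N) with hfdef
  have hdiff : Differentiable ℂ f := entire_aux N κ z
  -- the rectangle identity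
  have hG : ∀ T : ℝ,
      ((∫ x : ℝ in c₁..c₂, f ((x : ℂ) + ((-T : ℝ) : ℂ) * Complex.I)) -
        (∫ x : ℝ in c₁..c₂, f ((x : ℂ) + ((T : ℝ) : ℂ) * Complex.I)) +
        Complex.I • (∫ y : ℝ in (-T)..T, f ((c₂ : ℂ) + (y : ℂ) * Complex.I)) -
        Complex.I • (∫ y : ℝ in (-T)..T, f ((c₁ : ℂ) + (y : ℂ) * Complex.I))) = 0 := by
    intro T
    exact Complex.integral_boundary_rect_eq_zero_of_differentiableOn f
      (⟨c₁, -T⟩ : ℂ) (⟨c₂, T⟩ : ℂ) hdiff.differentiableOn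
  -- vertical integrals converge
  have hV : ∀ c : ℝ, 0 < c → Filter.Tendsto
      (fun T : ℝ => ∫ y : ℝ in (-T)..T, f ((c : ℂ) + (y : ℂ) * Complex.I))
      Filter.atTop (nhds (∫ s : ℝ, f ((c : ℂ) + (s : ℂ) * Complex.I))) := by
    intro c hc
    exact MeasureTheory.intervalIntegral_tendsto_integral
      (integrable_line N m hm hm1 κ hκ z c hc) Filter.tendsto_neg_atTop_atBot
      Filter.tendsto_id
  -- horizontal integrals vanish
  obtain ⟨S, hS1, hS⟩ := key_bound N m hm hm1 κ hκ z c₁ c₂ h1 h12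
  have hN0 : (0:ℝ) < N := by
    have : 0 < N := by omega
    exact_mod_cast this
  set k : ℝ := N * c₁ / 2 with hk
  have hkpos : 0 < k := by rw [hk]; positivity
  have hexp0 : Filter.Tendsto (fun T : ℝ => Real.exp (-k * T ^ 2) * |c₂ - c₁|)
      Filter.atTop (nhds 0) := by
    have h1' : Filter.Tendsto (fun T : ℝ => -k * T ^ 2) Filter.atTop Filter.atBot :=
      Filter.tendsto_neg_const_mul_pow_atTop two_ne_zero (neg_lt_zero.mpr hkpos)
    have := (Real.tendsto_exp_atBot.comp h1').mul_const |c₂ - c₁|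
    simpa using this
  have hH : ∀ (sgn : ℝ → ℝ), (∀ T, |sgn T| = |T|) →
      Filter.Tendsto (fun T : ℝ => ∫ x : ℝ in c₁..c₂, f ((x : ℂ) + ((sgn T : ℝ) : ℂ) * Complex.I))
        Filter.atTop (nhds 0) := by
    intro sgn hsgn
    apply squeeze_zero_norm'
    · filter_upwards [Filter.eventually_ge_atTop S] with T hT
      have hTS : S ≤ |sgn T| := by rw [hsgn]; exact le_trans hT (le_abs_self T)
      have hb : ∀ x ∈ Set.uIoc c₁ c₂,
          ‖f ((x : ℂ) + ((sgn T : ℝ) : ℂ) * Complex.I)‖ ≤ Real.exp (-k * T ^ 2) := by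
        intro x hx
        rw [Set.uIoc_of_le h12] at hx
        have := hS x (sgn T) hx.1.le hx.2 hTS
        refine le_trans this (Real.exp_le_exp.mpr ?_)
        have : (sgn T) ^ 2 = T ^ 2 := by
          rw [← _root_.sq_abs, hsgn, _root_.sq_abs]
        rw [this, hk, neg_mul]
      exact intervalIntegral.norm_integral_le_of_norm_le_const hb
    · exact hexp0
  -- combine
  have hGlim : Filter.Tendsto (fun T : ℝ =>
      (∫ x : ℝ in c₁..c₂, f ((x : ℂ) + ((-T : ℝ) : ℂ) * Complex.I)) -
        (∫ x : ℝ in c₁..c₂, f ((x : ℂ) + ((T : ℝ) : ℂ) * Complex.I)) +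
        Complex.I • (∫ y : ℝ in (-T)..T, f ((c₂ : ℂ) + (y : ℂ) * Complex.I)) -
        Complex.I • (∫ y : ℝ in (-T)..T, f ((c₁ : ℂ) + (y : ℂ) * Complex.I)))
      Filter.atTop (nhds (0 - 0 +
        Complex.I • (∫ s : ℝ, f ((c₂ : ℂ) + (s : ℂ) * Complex.I)) -
        Complex.I • (∫ s : ℝ, f ((c₁ : ℂ) + (s : ℂ) * Complex.I)))) := by
    refine Filter.Tendsto.sub (Filter.Tendsto.add (Filter.Tendsto.sub ?_ ?_)
      ((hV c₂ h2).const_smul Complex.I)) ((hV c₁ h1).const_smul Complex.I)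
    · exact hH (fun T => -T) (fun T => abs_neg T)
    · exact hH (fun T => T) (fun T => rfl)
  have hG' : Filter.Tendsto (fun T : ℝ =>
      (∫ x : ℝ in c₁..c₂, f ((x : ℂ) + ((-T : ℝ) : ℂ) * Complex.I)) -
        (∫ x : ℝ in c₁..c₂, f ((x : ℂ) + ((T : ℝ) : ℂ) * Complex.I)) +
        Complex.I • (∫ y : ℝ in (-T)..T, f ((c₂ : ℂ) + (y : ℂ) * Complex.I)) -
        Complex.I • (∫ y : ℝ in (-T)..T, f ((c₁ : ℂ) + (y : ℂ) * Complex.I)))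
      Filter.atTop (nhds 0) :=
    Filter.Tendsto.congr (fun T => (hG T).symm) tendsto_const_nhds
  have hzero := tendsto_nhds_unique hGlim hG'
  have hII : Complex.I * (∫ s : ℝ, f ((c₂ : ℂ) + (s : ℂ) * Complex.I)) =
      Complex.I * (∫ s : ℝ, f ((c₁ : ℂ) + (s : ℂ) * Complex.I)) := by
    have h' : Complex.I • (∫ s : ℝ, f ((c₂ : ℂ) + (s : ℂ) * Complex.I)) -
        Complex.I • (∫ s : ℝ, f ((c₁ : ℂ) + (s : ℂ) * Complex.I)) = 0 := by
      have := hzero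
      rw [zero_sub] at this
      linear_combination this
    rw [smul_eq_mul, smul_eq_mul] at h'
    linear_combination h'
  exact (mul_left_cancel₀ Complex.I_ne_zero hII).symm

/-- For odd `N ≥ 3` and `κ_N = (-1)^{(N+1)/2}`, for every `z : ℂ` and every real `c > 0`,
the function `s ↦ exp (z (c + i s) + κ_N (c + i s)^N)` is integrable on `ℝ`, and the value
`(1/(2π)) ∫_ℝ exp (z (c + i s) + κ_N (c + i s)^N) ds` does not depend on the choice of
`c > 0`. -/
theorem stmt_2 (N : ℕ) (hN : 3 ≤ N) (hNodd : Odd N)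
    (κ : ℂ) (hκ : κ = (-1 : ℂ) ^ ((N + 1) / 2)) :
    (∀ z : ℂ, ∀ c : ℝ, 0 < c →
      Integrable (fun s : ℝ =>
        Complex.exp (z * ((c : ℂ) + (s : ℂ) * Complex.I) +
          κ * ((c : ℂ) + (s : ℂ) * Complex.I) ^ N))) ∧
    (∀ z : ℂ, ∀ c₁ c₂ : ℝ, 0 < c₁ → 0 < c₂ →
      (1 / (2 * Real.pi) : ℂ) *
          ∫ s : ℝ, Complex.exp (z * ((c₁ : ℂ) + (s : ℂ) * Complex.I) +
            κ * ((c₁ : ℂ) + (s : ℂ) * Complex.I) ^ N) =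
        (1 / (2 * Real.pi) : ℂ) *
          ∫ s : ℝ, Complex.exp (z * ((c₂ : ℂ) + (s : ℂ) * Complex.I) +
            κ * ((c₂ : ℂ) + (s : ℂ) * Complex.I) ^ N)) := by
  obtain ⟨m, hm⟩ := hNodd
  have hm1 : 1 ≤ m := by omega
  have hκ' : κ = (-1 : ℂ) ^ (m + 1) := by rw [hκ]; congr 1; omega
  constructor
  · intro z c hc
    exact integrable_line N m hm hm1 κ hκ' z c hc
  · intro z c₁ c₂ h1 h2
    rcases le_total c₁ c₂ with h | h
    · rw [line_integral_eq N m hm hm1 κ hκ' z c₁ c₂ h1 h]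
    · rw [line_integral_eq N m hm hm1 κ hκ' z c₂ c₁ h2 h]
end

section
/- Let N ≥ 3 be odd and κ_N = (−1)^{(N+1)/2}, and define A_N : ℂ → ℂ by A_N(z) = (1/(2π)) ∫_ℝ e^{z(1+is) + κ_N (1+is)^N} ds. Then A_N is an entire function and satisfies, for every z ∈ ℂ, that the (N−1)-st derivative of A_N at z equals −(κ_N/N) · z · A_N(z). -/
open MeasureTheory

section AiryAux
open Complex Finset

lemma airy_key {N : ℕ} {κ : ℂ} (hN : 3 ≤ N) (hNodd : Odd N)
    (hκ : κ = (-1 : ℂ) ^ ((N + 1) / 2)) (s : ℝ) :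
    (κ * (1 + (s : ℂ) * Complex.I) ^ N).re ≤
      -(N : ℝ) * s ^ (N - 1) + 2 ^ N * (1 + |s|) ^ (N - 2) := by
  obtain ⟨m, hm⟩ := hNodd
  have hm1 : 1 ≤ m := by omega
  have hκ' : κ = (-1 : ℂ) ^ (m + 1) := by rw [hκ]; congr 1; omega
  have hI2 : (Complex.I) ^ (2 * m) = (-1 : ℂ) ^ m := by
    rw [pow_mul, Complex.I_sq]
  have hκI : κ * Complex.I ^ (2 * m) = -1 := by
    rw [hκ', hI2, ← pow_add]
    have : Odd (m + 1 + m) := ⟨m, by ring⟩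
    exact this.neg_one_pow
  -- expansion
  have hexp : κ * (1 + (s : ℂ) * Complex.I) ^ N
      = ∑ k ∈ range (N + 1), ((s : ℝ) ^ k : ℝ) * (κ * Complex.I ^ k * (N.choose k : ℂ)) := by
    have : (1 + (s : ℂ) * Complex.I) = ((s : ℂ) * Complex.I + 1) := by ring
    rw [this, add_pow, Finset.mul_sum]
    refine Finset.sum_congr rfl fun k _ => ?_
    push_cast
    ring
  have hre : (κ * (1 + (s : ℂ) * Complex.I) ^ N).re
      = ∑ k ∈ range (N + 1), s ^ k * (κ * Complex.I ^ k * (N.choose k : ℂ)).re := by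
    rw [hexp, Complex.re_sum]
    refine Finset.sum_congr rfl fun k _ => ?_
    rw [Complex.re_ofReal_mul]
  have hNsplit : N + 1 = (N - 1) + 1 + 1 := by omega
  rw [hre, hNsplit, Finset.sum_range_succ, Finset.sum_range_succ]
  have hterm_top : s ^ (N - 1 + 1) * (κ * Complex.I ^ (N - 1 + 1) * (N.choose (N - 1 + 1) : ℂ)).re = 0 := by
    have h1 : N - 1 + 1 = N := by omega
    have h2 : Complex.I ^ N = Complex.I ^ (2 * m) * Complex.I := by
      rw [hm]; ring
    rw [h1, h2, Nat.choose_self]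
    have : κ * (Complex.I ^ (2 * m) * Complex.I) * ((1 : ℕ) : ℂ) = -Complex.I := by
      push_cast; rw [← mul_assoc, hκI]; ring
    rw [this]
    simp
  have hterm_sub : s ^ (N - 1) * (κ * Complex.I ^ (N - 1) * (N.choose (N - 1) : ℂ)).re
      = -(N : ℝ) * s ^ (N - 1) := by
    have h1 : N - 1 = 2 * m := by omega
    have h2 : N.choose (N - 1) = N := by
      have : N - 1 = N - 1 := rfl
      calc N.choose (N - 1) = N.choose 1 := by
            rw [← Nat.choose_symm (by omega : 1 ≤ N)]
        _ = N := Nat.choose_one_right N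
    have h3 : κ * Complex.I ^ (N - 1) = -1 := by rw [h1]; exact hκI
    rw [h2, h3, h1]
    have : ((-1 : ℂ)) * (N : ℂ) = ((-(N : ℝ) : ℝ) : ℂ) := by push_cast; ring
    rw [this, Complex.ofReal_re]
    ring
  rw [hterm_top, hterm_sub, add_zero]
  have hrest : ∑ k ∈ range (N - 1), s ^ k * (κ * Complex.I ^ k * (N.choose k : ℂ)).re
      ≤ 2 ^ N * (1 + |s|) ^ (N - 2) := by
    have hbound : ∀ k ∈ range (N - 1),
        s ^ k * (κ * Complex.I ^ k * (N.choose k : ℂ)).re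
          ≤ (N.choose k : ℝ) * (1 + |s|) ^ (N - 2) := by
      intro k hk
      rw [Finset.mem_range] at hk
      have h1 : s ^ k * (κ * Complex.I ^ k * (N.choose k : ℂ)).re
          ≤ |s ^ k * (κ * Complex.I ^ k * (N.choose k : ℂ)).re| := le_abs_self _
      refine h1.trans ?_
      rw [abs_mul]
      have h2 : |(κ * Complex.I ^ k * (N.choose k : ℂ)).re| ≤ (N.choose k : ℝ) := by
        refine (Complex.abs_re_le_norm _).trans ?_
        rw [norm_mul, norm_mul, hκ]
        simp [Complex.norm_natCast]
      have h3 : |s ^ k| ≤ (1 + |s|) ^ (N - 2) := by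
        rw [_root_.abs_pow]
        calc |s| ^ k ≤ (1 + |s|) ^ k :=
              pow_le_pow_left₀ (abs_nonneg s) (by linarith [abs_nonneg s]) k
        _ ≤ (1 + |s|) ^ (N - 2) := by
              apply pow_le_pow_right₀ (by linarith [abs_nonneg s]) (by omega)
      calc |s ^ k| * |(κ * Complex.I ^ k * (N.choose k : ℂ)).re|
          ≤ (1 + |s|) ^ (N - 2) * (N.choose k : ℝ) := by
            apply mul_le_mul h3 h2 (abs_nonneg _) (by positivity)
        _ = (N.choose k : ℝ) * (1 + |s|) ^ (N - 2) := by ring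
    refine (Finset.sum_le_sum hbound).trans ?_
    rw [← Finset.sum_mul]
    have hc : ∑ k ∈ range (N - 1), (N.choose k : ℝ) ≤ 2 ^ N := by
      have h4 : ∑ k ∈ range (N - 1), (N.choose k : ℝ)
          ≤ ∑ k ∈ range (N + 1), (N.choose k : ℝ) := by
        apply Finset.sum_le_sum_of_subset_of_nonneg
        · exact Finset.range_subset_range.mpr (by omega)
        · intro i _ _; positivity
      refine h4.trans ?_
      rw [← Nat.cast_sum]
      rw [Nat.sum_range_choose]
      norm_num
    have : (0:ℝ) ≤ (1 + |s|) ^ (N - 2) := by positivity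
    nlinarith
  linarith

lemma airy_bound_integrable {N : ℕ} (hN : 3 ≤ N) (hNeven : Even (N - 1)) (k : ℕ) (c : ℝ)
    (hc : 0 ≤ c) :
    Integrable (fun s : ℝ => (1 + |s|) ^ k *
      Real.exp (c * (1 + |s|) + (-(N : ℝ) * s ^ (N - 1) + 2 ^ N * (1 + |s|) ^ (N - 2)))) := by
  set B : ℝ → ℝ := fun s => (1 + |s|) ^ k *
      Real.exp (c * (1 + |s|) + (-(N : ℝ) * s ^ (N - 1) + 2 ^ N * (1 + |s|) ^ (N - 2))) with hB
  have hcont : Continuous B := by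
    apply Continuous.mul
    · fun_prop
    · apply Real.continuous_exp.comp
      fun_prop
  have heven : ∀ s : ℝ, B (-s) = B s := by
    intro s
    simp only [hB, abs_neg, hNeven.neg_pow]
  have hIoi : IntegrableOn B (Set.Ioi 0) := by
    refine integrable_of_isBigO_exp_neg (a := 0) one_pos hcont.continuousOn ?_
    refine Asymptotics.IsBigO.of_bound 1 ?_
    have hD : (0:ℝ) ≤ (k : ℝ) + c + 2 ^ N + 1 := by positivity
    filter_upwards [Filter.eventually_ge_atTop (max 1 (((k : ℝ) + c + 2 ^ N + 1) * 2 ^ (N - 2)))]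
      with s hs
    have hs1 : (1:ℝ) ≤ s := le_trans (le_max_left _ _) hs
    have hs2 : ((k : ℝ) + c + 2 ^ N + 1) * 2 ^ (N - 2) ≤ s := le_trans (le_max_right _ _) hs
    have hs0 : (0:ℝ) < s := by linarith
    have habs : |s| = s := abs_of_pos hs0
    rw [Real.norm_eq_abs, Real.norm_eq_abs, Real.abs_exp, one_mul]
    rw [_root_.abs_of_nonneg (by positivity : (0:ℝ) ≤ B s)]
    -- suffices to show B s * exp s ≤ 1
    have key : B s * Real.exp s ≤ 1 := by
      have hpow : (1 + s) ^ k ≤ Real.exp ((k : ℝ) * (1 + s)) := by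
        calc (1 + s) ^ k ≤ Real.exp (1 + s) ^ k := by
              apply pow_le_pow_left₀ (by linarith)
              linarith [Real.add_one_le_exp (1 + s), Real.add_one_le_exp s]
          _ = Real.exp ((k : ℝ) * (1 + s)) := by
              rw [← Real.exp_nat_mul]
      have hBle : B s * Real.exp s ≤ Real.exp ((k : ℝ) * (1 + s) + (c * (1 + s) +
          (-(N : ℝ) * s ^ (N - 1) + 2 ^ N * (1 + s) ^ (N - 2))) + s) := by
        have hsplit : Real.exp ((k : ℝ) * (1 + s) + (c * (1 + s) +
            (-(N : ℝ) * s ^ (N - 1) + 2 ^ N * (1 + s) ^ (N - 2))) + s)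
            = Real.exp ((k : ℝ) * (1 + s)) * Real.exp (c * (1 + s) +
            (-(N : ℝ) * s ^ (N - 1) + 2 ^ N * (1 + s) ^ (N - 2))) * Real.exp s := by
          rw [← Real.exp_add, ← Real.exp_add]
        rw [hB]
        simp only [habs]
        rw [hsplit]
        have h1 : (0:ℝ) < Real.exp (c * (1 + s) +
            (-(N : ℝ) * s ^ (N - 1) + 2 ^ N * (1 + s) ^ (N - 2))) := Real.exp_pos _
        exact mul_le_mul_of_nonneg_right
          (mul_le_mul_of_nonneg_right hpow h1.le) (Real.exp_pos s).le
      refine hBle.trans ?_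
      rw [Real.exp_le_one_iff]
      -- exponent ≤ 0
      have e1 : (1:ℝ) + s ≤ (1 + s) ^ (N - 2) := by
        apply le_self_pow₀ (by linarith) (by omega)
      have e2 : ((1:ℝ) + s) ^ (N - 2) ≤ 2 ^ (N - 2) * s ^ (N - 2) := by
        calc ((1:ℝ) + s) ^ (N - 2) ≤ (2 * s) ^ (N - 2) := by
              apply pow_le_pow_left₀ (by linarith) (by linarith)
          _ = 2 ^ (N - 2) * s ^ (N - 2) := mul_pow 2 s (N - 2)
      have e3 : s ^ (N - 1) = s ^ (N - 2) * s := by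
        rw [← pow_succ]
        congr 1
        omega
      have e4 : (0:ℝ) < s ^ (N - 2) := by positivity
      have e5 : ((k : ℝ) + c + 2 ^ N + 1) * (1 + s) ^ (N - 2) ≤
          ((k : ℝ) + c + 2 ^ N + 1) * (2 ^ (N - 2) * s ^ (N - 2)) := by
        apply mul_le_mul_of_nonneg_left e2 hD
      -- combine
      have e6 : ((k : ℝ) + c + 2 ^ N + 1) * 2 ^ (N - 2) * s ^ (N - 2) ≤ s * s ^ (N - 2) := by
        apply mul_le_mul_of_nonneg_right hs2 e4.le
      have hkc : (0:ℝ) ≤ (k : ℝ) + c := by positivity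
      have hNs : s * s ^ (N - 2) ≤ (N : ℝ) * s ^ (N - 1) := by
        rw [e3]
        have hN1 : (1:ℝ) ≤ (N : ℝ) := by exact_mod_cast Nat.one_le_iff_ne_zero.mpr (by omega)
        nlinarith [mul_pos hs0 e4]
      have f1 : (k:ℝ)*(1+s) + c*(1+s) ≤ ((k:ℝ)+c)*(1+s)^(N-2) := by nlinarith
      have f2 : s ≤ (1+s)^(N-2) := by linarith
      linarith
    rw [neg_one_mul, Real.exp_neg, ← one_div, le_div_iff₀ (Real.exp_pos s)]
    exact key
  have hIio : IntegrableOn B (Set.Iio 0) := by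
    rw [← (Measure.measurePreserving_neg (volume : Measure ℝ)).integrableOn_comp_preimage
        (Homeomorph.neg ℝ).measurableEmbedding]
    simp only [Function.comp_def, Set.neg_preimage, Set.neg_Iio, neg_zero]
    have : (fun s : ℝ => B (-s)) = B := funext heven
    rw [this]
    exact hIoi
  have : Integrable B := by
    rw [← integrableOn_univ, ← Set.Iio_union_Ici (a := (0:ℝ)), integrableOn_union,
      integrableOn_Ici_iff_integrableOn_Ioi]
    exact ⟨hIio, hIoi⟩
  exact this

lemma airy_norm_le {N k : ℕ} {κ z : ℂ} {c : ℝ} (hz : ‖z‖ ≤ c) (s : ℝ) :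
    ‖(1 + (s : ℂ) * Complex.I) ^ k *
        Complex.exp (z * (1 + (s : ℂ) * Complex.I) + κ * (1 + (s : ℂ) * Complex.I) ^ N)‖
      ≤ (1 + |s|) ^ k * Real.exp (c * (1 + |s|) + (κ * (1 + (s : ℂ) * Complex.I) ^ N).re) := by
  have hc : 0 ≤ c := ((norm_nonneg z).trans hz)
  have h1 : ‖(1 + (s : ℂ) * Complex.I)‖ ≤ 1 + |s| := by
    refine (norm_add_le _ _).trans ?_
    simp [Complex.norm_real]
  have h2 : (z * (1 + (s : ℂ) * Complex.I)).re ≤ c * (1 + |s|) := by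
    refine (Complex.re_le_norm _).trans ?_
    rw [norm_mul]
    exact mul_le_mul hz h1 (norm_nonneg _) hc
  rw [norm_mul, norm_pow, Complex.norm_exp,
    Complex.add_re]
  have h3 : (0:ℝ) ≤ 1 + |s| := by positivity
  refine mul_le_mul (pow_le_pow_left₀ (norm_nonneg _) h1 k)
    (Real.exp_le_exp.mpr (by linarith)) (Real.exp_pos _).le (by positivity)

lemma airy_integrand_integrable {N : ℕ} {κ : ℂ} (hN : 3 ≤ N) (hNodd : Odd N)
    (hκ : κ = (-1 : ℂ) ^ ((N + 1) / 2)) (k : ℕ) {z : ℂ} {c : ℝ} (hz : ‖z‖ ≤ c) :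
    Integrable (fun s : ℝ => (1 + (s : ℂ) * Complex.I) ^ k *
      Complex.exp (z * (1 + (s : ℂ) * Complex.I) + κ * (1 + (s : ℂ) * Complex.I) ^ N)) := by
  have hc : 0 ≤ c := ((norm_nonneg z).trans hz)
  have hNeven : Even (N - 1) := by
    obtain ⟨m, hm⟩ := hNodd; exact ⟨m, by omega⟩
  refine (airy_bound_integrable hN hNeven k c hc).mono' ?_ ?_
  · apply Continuous.aestronglyMeasurable
    fun_prop
  · filter_upwards with s
    refine (airy_norm_le hz s).trans ?_
    have h3 : (0:ℝ) ≤ (1 + |s|) ^ k := by positivity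
    have := airy_key hN hNodd hκ s
    exact mul_le_mul_of_nonneg_left (Real.exp_le_exp.mpr (by linarith)) h3

lemma airy_realbound_integrable {N : ℕ} {κ : ℂ} (hN : 3 ≤ N) (hNodd : Odd N)
    (hκ : κ = (-1 : ℂ) ^ ((N + 1) / 2)) (k : ℕ) (c : ℝ) (hc : 0 ≤ c) :
    Integrable (fun s : ℝ => (1 + |s|) ^ k *
      Real.exp (c * (1 + |s|) + (κ * (1 + (s : ℂ) * Complex.I) ^ N).re)) := by
  have hNeven : Even (N - 1) := by
    obtain ⟨m, hm⟩ := hNodd; exact ⟨m, by omega⟩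
  refine (airy_bound_integrable hN hNeven k c hc).mono' ?_ ?_
  · apply Continuous.aestronglyMeasurable
    apply Continuous.mul (by fun_prop)
    apply Real.continuous_exp.comp
    fun_prop
  · filter_upwards with s
    have h3 : (0:ℝ) ≤ (1 + |s|) ^ k := by positivity
    have hkey := airy_key hN hNodd hκ s
    rw [Real.norm_eq_abs, _root_.abs_of_nonneg (by positivity)]
    exact mul_le_mul_of_nonneg_left (Real.exp_le_exp.mpr (by linarith)) h3

lemma airy_hasDerivAt {N : ℕ} {κ : ℂ} (hN : 3 ≤ N) (hNodd : Odd N)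
    (hκ : κ = (-1 : ℂ) ^ ((N + 1) / 2)) (k : ℕ) (z₀ : ℂ) :
    HasDerivAt (fun z : ℂ => ∫ s : ℝ, (1 + (s : ℂ) * Complex.I) ^ k *
        Complex.exp (z * (1 + (s : ℂ) * Complex.I) + κ * (1 + (s : ℂ) * Complex.I) ^ N))
      (∫ s : ℝ, (1 + (s : ℂ) * Complex.I) ^ (k + 1) *
        Complex.exp (z₀ * (1 + (s : ℂ) * Complex.I) + κ * (1 + (s : ℂ) * Complex.I) ^ N)) z₀ := by
  have hmeas : ∀ (z : ℂ) (j : ℕ), AEStronglyMeasurable (fun s : ℝ =>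
      (1 + (s : ℂ) * Complex.I) ^ j *
        Complex.exp (z * (1 + (s : ℂ) * Complex.I) + κ * (1 + (s : ℂ) * Complex.I) ^ N))
      (volume : Measure ℝ) := by
    intro z j
    apply Continuous.aestronglyMeasurable
    fun_prop
  refine (hasDerivAt_integral_of_dominated_loc_of_deriv_le (s := Metric.ball z₀ 1)
    (F' := fun (z : ℂ) (s : ℝ) => (1 + (s : ℂ) * Complex.I) ^ (k + 1) *
      Complex.exp (z * (1 + (s : ℂ) * Complex.I) + κ * (1 + (s : ℂ) * Complex.I) ^ N)) (Metric.ball_mem_nhds z₀ one_pos)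
    (Filter.Eventually.of_forall fun z => hmeas z k)
    (airy_integrand_integrable hN hNodd hκ k (le_refl ‖z₀‖))
    (hmeas z₀ (k + 1))
    ?_ (airy_realbound_integrable hN hNodd hκ (k + 1) (‖z₀‖ + 1)
      (by positivity)) ?_).2
  · filter_upwards with s
    intro z hz
    refine airy_norm_le ?_ s
    rw [Metric.mem_ball] at hz
    calc ‖z‖ = ‖z₀ + (z - z₀)‖ := by ring_nf
      _ ≤ ‖z₀‖ + ‖z - z₀‖ := norm_add_le _ _
      _ ≤ ‖z₀‖ + 1 := by
          have : ‖z - z₀‖ = dist z z₀ := (dist_eq_norm z z₀).symm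
          rw [this]; linarith
  · filter_upwards with s
    intro z hz
    have hw : HasDerivAt (fun z : ℂ => z * (1 + (s : ℂ) * Complex.I) +
        κ * (1 + (s : ℂ) * Complex.I) ^ N) (1 + (s : ℂ) * Complex.I) z :=
      (hasDerivAt_mul_const _).add_const _
    have h2 := (hw.cexp).const_mul ((1 + (s : ℂ) * Complex.I) ^ k)
    refine h2.congr_deriv ?_
    rw [pow_succ]
    ring

lemma airy_ibp {N : ℕ} {κ : ℂ} (hN : 3 ≤ N) (hNodd : Odd N)
    (hκ : κ = (-1 : ℂ) ^ ((N + 1) / 2)) (z : ℂ) :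
    ∫ s : ℝ, (1 + (s : ℂ) * Complex.I) ^ (N - 1) *
        Complex.exp (z * (1 + (s : ℂ) * Complex.I) + κ * (1 + (s : ℂ) * Complex.I) ^ N)
      = -(κ / (N : ℂ)) * z * ∫ s : ℝ, (1 + (s : ℂ) * Complex.I) ^ 0 *
        Complex.exp (z * (1 + (s : ℂ) * Complex.I) + κ * (1 + (s : ℂ) * Complex.I) ^ N) := by
  have hκ2 : κ * κ = 1 := by
    rw [hκ, ← pow_add]
    exact Even.neg_one_pow ⟨(N + 1) / 2, rfl⟩
  set G : ℕ → ℝ → ℂ := fun k s => (1 + (s : ℂ) * Complex.I) ^ k *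
      Complex.exp (z * (1 + (s : ℂ) * Complex.I) + κ * (1 + (s : ℂ) * Complex.I) ^ N) with hG
  have hint : ∀ k, Integrable (G k) := fun k =>
    airy_integrand_integrable hN hNodd hκ k (le_refl ‖z‖)
  -- the derivative of s ↦ exp(f z s)
  have hderiv : ∀ s : ℝ, HasDerivAt (fun s : ℝ => Complex.exp
      (z * (1 + (s : ℂ) * Complex.I) + κ * (1 + (s : ℂ) * Complex.I) ^ N))
      ((z * Complex.I) * G 0 s + (κ * N * Complex.I) * G (N - 1) s) s := by
    intro s
    have h0 : HasDerivAt (fun s : ℝ => ((s : ℂ))) 1 s := by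
      simpa using (hasDerivAt_id s).ofReal_comp
    have h1 : HasDerivAt (fun s : ℝ => (1 + (s : ℂ) * Complex.I)) Complex.I s := by
      simpa using (h0.mul_const Complex.I).const_add 1
    have hq : HasDerivAt (fun w : ℂ => z * w + κ * w ^ N)
        (z + κ * ((N : ℂ) * (1 + (s : ℂ) * Complex.I) ^ (N - 1)))
        (1 + (s : ℂ) * Complex.I) := by
      have := ((hasDerivAt_id (1 + (s : ℂ) * Complex.I)).const_mul z).add
        ((hasDerivAt_pow N (1 + (s : ℂ) * Complex.I)).const_mul κ)
      exact this.congr_deriv (by ring)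
    have h2 : HasDerivAt (fun s : ℝ => z * (1 + (s : ℂ) * Complex.I) +
        κ * (1 + (s : ℂ) * Complex.I) ^ N)
        (Complex.I • (z + κ * ((N : ℂ) * (1 + (s : ℂ) * Complex.I) ^ (N - 1)))) s :=
      HasDerivAt.scomp s hq h1
    have h3 := h2.cexp
    convert h3 using 1
    rw [hG]
    simp only [pow_zero, one_mul, smul_eq_mul]
    ring
  have hφ'int : Integrable (fun s : ℝ => (z * Complex.I) * G 0 s +
      (κ * N * Complex.I) * G (N - 1) s) :=
    ((hint 0).const_mul _).add ((hint (N - 1)).const_mul _)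
  have hφint : Integrable (fun s : ℝ => Complex.exp
      (z * (1 + (s : ℂ) * Complex.I) + κ * (1 + (s : ℂ) * Complex.I) ^ N)) := by
    have := hint 0
    simpa only [hG, pow_zero, one_mul] using this
  have hzero : (∫ s : ℝ, ((z * Complex.I) * G 0 s + (κ * N * Complex.I) * G (N - 1) s)) = 0 :=
    integral_eq_zero_of_hasDerivAt_of_integrable hderiv hφ'int hφint
  rw [integral_add ((hint 0).const_mul _) ((hint (N - 1)).const_mul _),
    integral_const_mul, integral_const_mul] at hzero
  -- algebra
  have hNne : (N : ℂ) ≠ 0 := by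
    exact_mod_cast Nat.cast_ne_zero.mpr (by omega)
  have h3 : z * (∫ s, G 0 s) + κ * (N : ℂ) * (∫ s, G (N - 1) s) = 0 := by
    have hfac : Complex.I * (z * (∫ s, G 0 s) + κ * (N : ℂ) * (∫ s, G (N - 1) s)) = 0 := by
      rw [← hzero]; ring
    rcases mul_eq_zero.mp hfac with h | h
    · exact absurd h Complex.I_ne_zero
    · exact h
  have h4 : (N : ℂ) * (∫ s, G (N - 1) s) = -κ * z * (∫ s, G 0 s) := by
    linear_combination κ * h3 + (-(N : ℂ) * ∫ s, G (N - 1) s) * hκ2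
  show (∫ s, G (N - 1) s) = -(κ / (N : ℂ)) * z * ∫ s, G 0 s
  have h5 : -(κ / (N : ℂ)) * z * (∫ s, G 0 s) = (-κ * z * (∫ s, G 0 s)) / (N : ℂ) := by ring
  rw [h5, eq_div_iff hNne]
  linear_combination h4


end AiryAux

/-- For odd `N ≥ 3` and `κ_N = (-1)^{(N+1)/2}`, the Airy-type function
`A_N(z) = (1/(2π)) ∫_ℝ exp (z (1 + i s) + κ_N (1 + i s)^N) ds` is entire and satisfies
the higher-order Airy equation `A_N^{(N-1)}(z) = -(κ_N / N) z A_N(z)`. -/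
theorem stmt_3 (N : ℕ) (hN : 3 ≤ N) (hNodd : Odd N)
    (κ : ℂ) (hκ : κ = (-1 : ℂ) ^ ((N + 1) / 2))
    (A : ℂ → ℂ)
    (hA : ∀ z : ℂ, A z = (1 / (2 * Real.pi) : ℂ) *
      ∫ s : ℝ, Complex.exp (z * (1 + (s : ℂ) * Complex.I) +
        κ * (1 + (s : ℂ) * Complex.I) ^ N)) :
    Differentiable ℂ A ∧
      ∀ z : ℂ, iteratedDeriv (N - 1) A z = -(κ / (N : ℂ)) * z * A z := by
  set c0 : ℂ := (1 / (2 * Real.pi) : ℂ) with hc0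
  set J : ℕ → ℂ → ℂ := fun k z => ∫ s : ℝ, (1 + (s : ℂ) * Complex.I) ^ k *
      Complex.exp (z * (1 + (s : ℂ) * Complex.I) + κ * (1 + (s : ℂ) * Complex.I) ^ N) with hJ
  have hAeq : A = fun z => c0 * J 0 z := by
    funext z
    rw [hA z, hJ]
    simp only [pow_zero, one_mul]
  have hJd : ∀ (k : ℕ) (z : ℂ), HasDerivAt (J k) (J (k + 1) z) z := fun k z =>
    airy_hasDerivAt hN hNodd hκ k z
  have hiter : ∀ j : ℕ, iteratedDeriv j A = fun z => c0 * J j z := by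
    intro j
    induction j with
    | zero => simpa [iteratedDeriv_zero] using hAeq
    | succ j ih =>
        rw [iteratedDeriv_succ, ih]
        funext z
        exact (((hJd j z).const_mul c0)).deriv
  constructor
  · rw [hAeq]
    exact fun z => (((hJd 0 z).const_mul c0)).differentiableAt
  · intro z
    rw [hiter (N - 1)]
    have hibp := airy_ibp hN hNodd hκ z
    show c0 * J (N - 1) z = -(κ / (N : ℂ)) * z * A z
    rw [hA z]
    have hJ0 : J 0 z = ∫ s : ℝ, Complex.exp (z * (1 + (s : ℂ) * Complex.I) +
        κ * (1 + (s : ℂ) * Complex.I) ^ N) := by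
      rw [hJ]; simp only [pow_zero, one_mul]
    have : J (N - 1) z = -(κ / (N : ℂ)) * z * J 0 z := hibp
    rw [this, hJ0]
    ring
end

section
/- Let N ≥ 3 be odd, let ε ∈ {−1, 1}, and let z ∈ ℝ. Then the improper integral ∫_0^∞ cos(zs + ε s^N) ds converges, i.e., the limit as R → ∞ of ∫_0^R cos(zs + ε s^N) ds exists in ℝ. -/
open MeasureTheory Filter Set

/-- For odd `N ≥ 3`, `ε ∈ {-1, 1}` and real `z`, the improper integral
`∫_0^∞ cos (z s + ε s^N) ds` converges: the limit of `∫_0^R cos (z s + ε s^N) ds`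
as `R → ∞` exists in `ℝ`. -/
theorem stmt_4 (N : ℕ) (hN : 3 ≤ N) (hNodd : Odd N)
    (ε : ℝ) (hε : ε = -1 ∨ ε = 1) (z : ℝ) :
    ∃ L : ℝ,
      Filter.Tendsto (fun R : ℝ => ∫ s in (0:ℝ)..R, Real.cos (z * s + ε * s ^ N))
        Filter.atTop (nhds L) := by
  have hεabs : |ε| = 1 := by rcases hε with h | h <;> simp [h]
  set φ : ℝ → ℝ := fun s => z * s + ε * s ^ N with hφdef
  set φ' : ℝ → ℝ := fun s => z + ε * N * s ^ (N - 1) with hφ'def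
  set φ'' : ℝ → ℝ := fun s => ε * N * (N - 1) * s ^ (N - 2) with hφ''def
  have hNR : (3 : ℝ) ≤ (N : ℝ) := by exact_mod_cast hN
  have hd : ∀ s, HasDerivAt φ (φ' s) s := by
    intro s
    have h1 : HasDerivAt (fun x : ℝ => z * x) z s := by
      simpa using (hasDerivAt_id s).const_mul z
    have h2 : HasDerivAt (fun x : ℝ => ε * x ^ N) (ε * ((N : ℝ) * s ^ (N - 1))) s :=
      (hasDerivAt_pow N s).const_mul ε
    have := h1.add h2
    exact this.congr_deriv (by simp [hφ'def, mul_assoc])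
  have hd' : ∀ s, HasDerivAt φ' (φ'' s) s := by
    intro s
    have h2 : HasDerivAt (fun x : ℝ => ε * (N : ℝ) * x ^ (N - 1))
        (ε * (N : ℝ) * (((N - 1 : ℕ) : ℝ) * s ^ (N - 1 - 1))) s :=
      (hasDerivAt_pow (N - 1) s).const_mul (ε * (N : ℝ))
    have := (hasDerivAt_const s z).add h2
    have hcast : ((N - 1 : ℕ) : ℝ) = (N : ℝ) - 1 := by
      have h1 : 1 ≤ N := by omega
      push_cast [h1]; ring
    have hidx : N - 1 - 1 = N - 2 := by omega
    exact this.congr_deriv (by simp only [hφ''def, hcast, hidx]; ring)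
  have hφc : Continuous φ := by fun_prop
  have hφ'c : Continuous φ' := by fun_prop
  have hφ''c : Continuous φ'' := by fun_prop
  set a : ℝ := 1 + |z| with hadef
  have ha1 : (1 : ℝ) ≤ a := by
    have := abs_nonneg z; simp only [hadef]; linarith
  have ha0 : (0 : ℝ) < a := by linarith
  -- lower bound on |φ'|
  have hlow : ∀ s, a ≤ s → (N : ℝ) / 2 * s ^ (N - 1) ≤ |φ' s| := by
    intro s hs
    have hs1 : (1 : ℝ) ≤ s := le_trans ha1 hs
    have hs0 : (0 : ℝ) ≤ s := by linarith
    have hsp : (1 : ℝ) ≤ s ^ (N - 1) := one_le_pow₀ hs1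
    have habs : |ε * (N : ℝ) * s ^ (N - 1)| = (N : ℝ) * s ^ (N - 1) := by
      rw [abs_mul, abs_mul, hεabs, abs_of_nonneg (by positivity : (0:ℝ) ≤ (N:ℝ)),
        abs_of_nonneg (by positivity : (0:ℝ) ≤ s ^ (N-1))]
      ring
    have h1 : (N : ℝ) * s ^ (N - 1) - |z| ≤ |φ' s| := by
      have h2 := abs_sub_abs_le_abs_sub (ε * (N : ℝ) * s ^ (N - 1)) (-z)
      simp only [abs_neg, sub_neg_eq_add] at h2
      calc (N : ℝ) * s ^ (N - 1) - |z| = |ε * (N : ℝ) * s ^ (N - 1)| - |z| := by rw [habs]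
        _ ≤ |ε * (N : ℝ) * s ^ (N - 1) + z| := h2
        _ = |φ' s| := by rw [hφ'def]; ring_nf
    have h2 : |z| ≤ (N : ℝ) / 2 * s ^ (N - 1) := by
      have hz : |z| ≤ a := by simp only [hadef]; linarith
      have hsa : a ≤ s ^ (N - 1) := le_trans hs (le_self_pow₀ (by linarith) (by omega))
      nlinarith
    linarith
  have hφ'pos : ∀ s, a ≤ s → (0 : ℝ) < |φ' s| := by
    intro s hs
    have hs1 : (1 : ℝ) ≤ s := le_trans ha1 hs
    have hsp : (1 : ℝ) ≤ s ^ (N - 1) := one_le_pow₀ hs1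
    have := hlow s hs
    nlinarith
  have hφ'ne : ∀ s, a ≤ s → φ' s ≠ 0 := fun s hs => by
    have := hφ'pos s hs
    exact abs_pos.mp this
  set g : ℝ → ℝ := fun s => Real.sin (φ s) / φ' s with hgdef
  set h : ℝ → ℝ := fun s => Real.sin (φ s) * φ'' s / (φ' s) ^ 2 with hhdef
  have hgderiv : ∀ s, a ≤ s → HasDerivAt g (Real.cos (φ s) - h s) s := by
    intro s hs
    have hne := hφ'ne s hs
    have hsin : HasDerivAt (fun x => Real.sin (φ x)) (Real.cos (φ s) * φ' s) s :=
      (Real.hasDerivAt_sin (φ s)).comp s (hd s)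
    have := hsin.div (hd' s) hne
    refine this.congr_deriv (Eq.symm ?_)
    rw [hhdef]
    field_simp
  have hhc : ContinuousOn h (Ici a) := by
    apply ContinuousOn.div
    · exact ((Real.continuous_sin.comp hφc).mul hφ''c).continuousOn
    · exact (hφ'c.pow 2).continuousOn
    · intro s hs
      exact pow_ne_zero 2 (hφ'ne s hs)
  -- key bound
  have key : ∀ s, a ≤ s → |h s| ≤ 4 / s ^ N := by
    intro s hs
    have hs1 : (1 : ℝ) ≤ s := le_trans ha1 hs
    have hs0 : (0 : ℝ) < s := by linarith
    have hφ'sq : ((N : ℝ) / 2) ^ 2 * s ^ (2 * N - 2) ≤ (φ' s) ^ 2 := by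
      have h1 := hlow s hs
      have h2 : (0:ℝ) ≤ (N : ℝ) / 2 * s ^ (N - 1) := by positivity
      have h3 : ((N : ℝ) / 2 * s ^ (N - 1)) ^ 2 ≤ (φ' s) ^ 2 := by
        calc ((N : ℝ) / 2 * s ^ (N - 1)) ^ 2 ≤ |φ' s| ^ 2 := pow_le_pow_left₀ h2 h1 2
          _ = (φ' s) ^ 2 := sq_abs _
      have h4 : ((N : ℝ) / 2 * s ^ (N - 1)) ^ 2 = ((N : ℝ) / 2) ^ 2 * s ^ (2 * N - 2) := by
        rw [mul_pow, ← pow_mul]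
        congr 2
        omega
      linarith
    have hnum : |Real.sin (φ s) * φ'' s| ≤ (N : ℝ) * (N : ℝ) * s ^ (N - 2) := by
      rw [abs_mul]
      have h1 : |Real.sin (φ s)| ≤ 1 := Real.abs_sin_le_one _
      have h2 : |φ'' s| ≤ (N : ℝ) * (N : ℝ) * s ^ (N - 2) := by
        have he : φ'' s = ε * ((N : ℝ) * (((N : ℝ) - 1) * s ^ (N - 2))) := by
          rw [hφ''def]; ring
        rw [he, abs_mul, hεabs, one_mul, abs_mul, abs_mul,
          abs_of_nonneg (pow_nonneg hs0.le _),
          abs_of_nonneg (show (0:ℝ) ≤ (N:ℝ) by positivity),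
          abs_of_nonneg (show (0:ℝ) ≤ (N:ℝ) - 1 by linarith)]
        nlinarith [pow_nonneg hs0.le (N - 2)]
      calc |Real.sin (φ s)| * |φ'' s| ≤ 1 * ((N : ℝ) * (N : ℝ) * s ^ (N - 2)) :=
            mul_le_mul h1 h2 (abs_nonneg _) one_pos.le
        _ = (N : ℝ) * (N : ℝ) * s ^ (N - 2) := by ring
    have hφ'sqpos : (0 : ℝ) < (φ' s) ^ 2 := by
      have := hφ'pos s hs
      calc (0:ℝ) < |φ' s| ^ 2 := pow_pos this 2
        _ = (φ' s) ^ 2 := sq_abs _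
    have habsdiv : |h s| = |Real.sin (φ s) * φ'' s| / (φ' s) ^ 2 := by
      rw [hhdef]
      simp only
      rw [abs_div, abs_of_nonneg (sq_nonneg (φ' s))]
    rw [habsdiv]
    have step1 : |Real.sin (φ s) * φ'' s| / (φ' s) ^ 2 ≤
        ((N : ℝ) * (N : ℝ) * s ^ (N - 2)) / (((N : ℝ) / 2) ^ 2 * s ^ (2 * N - 2)) :=
      div_le_div₀ (by positivity) hnum (by positivity) hφ'sq
    have step2 : ((N : ℝ) * (N : ℝ) * s ^ (N - 2)) / (((N : ℝ) / 2) ^ 2 * s ^ (2 * N - 2))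
        ≤ 4 / s ^ N := by
      rw [div_le_div_iff₀ (by positivity) (by positivity)]
      have hp : s ^ (N - 2) * s ^ N = s ^ (2 * N - 2) := by
        rw [← pow_add]; congr 1; omega
      have heq2 : (N:ℝ) * N * s ^ (N - 2) * s ^ N
          = 4 * (((N : ℝ) / 2) ^ 2 * s ^ (2 * N - 2)) := by
        rw [show (N:ℝ) * N * s ^ (N - 2) * s ^ N
            = (N:ℝ) * N * (s ^ (N - 2) * s ^ N) from by ring, hp]
        ring
      linarith
    linarith
  -- integrability of h on Ioi a
  have hint : IntegrableOn h (Ioi a) := by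
    have hbound : IntegrableOn (fun s : ℝ => 4 * s ^ (-(N : ℝ))) (Ioi a) := by
      have := integrableOn_Ioi_rpow_of_lt (show -(N:ℝ) < -1 by linarith) ha0
      exact this.const_mul 4
    apply Integrable.mono' hbound
    · exact (hhc.mono (Ioi_subset_Ici le_rfl)).aestronglyMeasurable measurableSet_Ioi
    · filter_upwards [ae_restrict_mem measurableSet_Ioi] with s hs
      have hs' : a ≤ s := le_of_lt hs
      have hs0 : (0 : ℝ) < s := lt_of_lt_of_le ha0 hs'
      have := key s hs'
      rw [Real.rpow_neg hs0.le, Real.rpow_natCast]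
      rw [Real.norm_eq_abs]
      calc |h s| ≤ 4 / s ^ N := this
        _ = 4 * (s ^ N)⁻¹ := by ring
    -- done
  -- tendsto of tail integral
  have T2 : Tendsto (fun R : ℝ => ∫ s in a..R, h s) atTop (nhds (∫ s in Ioi a, h s)) :=
    intervalIntegral_tendsto_integral_Ioi a hint tendsto_id
  -- tendsto g → 0
  have T1 : Tendsto g atTop (nhds 0) := by
    refine squeeze_zero_norm' (a := fun R : ℝ => 2 / R) ?_ ?_
    · filter_upwards [eventually_ge_atTop a] with R hR
      have hR1 : (1 : ℝ) ≤ R := le_trans ha1 hR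
      have hR0 : (0 : ℝ) < R := by linarith
      have h1 := hlow R hR
      have h2 : R ≤ R ^ (N - 1) := le_self_pow₀ hR1 (by omega)
      have h3 : (3:ℝ)/2 * R ≤ |φ' R| := by nlinarith
      have h4 : (0:ℝ) < |φ' R| := lt_of_lt_of_le (by linarith) h3
      rw [Real.norm_eq_abs, hgdef]
      simp only
      rw [abs_div]
      calc |Real.sin (φ R)| / |φ' R| ≤ 1 / ((3:ℝ)/2 * R) := by
            apply div_le_div₀ (by positivity) (Real.abs_sin_le_one _) (by positivity) h3
        _ ≤ 2 / R := by
            rw [div_le_div_iff₀ (by positivity) hR0]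
            nlinarith
    · exact tendsto_const_nhds.div_atTop tendsto_id
  -- FTC identity for R ≥ a
  have hFTC : ∀ R, a ≤ R →
      (∫ s in a..R, Real.cos (φ s)) = g R - g a + ∫ s in a..R, h s := by
    intro R hR
    have huIcc : uIcc a R = Icc a R := uIcc_of_le hR
    have hmem : ∀ s ∈ uIcc a R, a ≤ s := by
      intro s hs; rw [huIcc] at hs; exact hs.1
    have hii_cos : IntervalIntegrable (fun s => Real.cos (φ s)) volume a R :=
      (Real.continuous_cos.comp hφc).intervalIntegrable a R
    have hii_h : IntervalIntegrable h volume a R := by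
      apply ContinuousOn.intervalIntegrable
      apply hhc.mono
      rw [huIcc]
      exact Icc_subset_Ici_self
    have := intervalIntegral.integral_eq_sub_of_hasDerivAt
      (f := g) (f' := fun s => Real.cos (φ s) - h s)
      (fun s hs => hgderiv s (hmem s hs)) (hii_cos.sub hii_h)
    rw [intervalIntegral.integral_sub hii_cos hii_h] at this
    linarith
  -- assemble
  refine ⟨(∫ s in (0:ℝ)..a, Real.cos (φ s)) - g a + ∫ s in Ioi a, h s, ?_⟩
  have heq : (fun R : ℝ => ∫ s in (0:ℝ)..R, Real.cos (z * s + ε * s ^ N)) =ᶠ[atTop]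
      fun R : ℝ => (∫ s in (0:ℝ)..a, Real.cos (φ s)) + (g R - g a + ∫ s in a..R, h s) := by
    filter_upwards [eventually_ge_atTop a] with R hR
    have hii1 : IntervalIntegrable (fun s => Real.cos (φ s)) volume 0 a :=
      (Real.continuous_cos.comp hφc).intervalIntegrable 0 a
    have hii2 : IntervalIntegrable (fun s => Real.cos (φ s)) volume a R :=
      (Real.continuous_cos.comp hφc).intervalIntegrable a R
    have hsplit := intervalIntegral.integral_add_adjacent_intervals hii1 hii2
    have : (∫ s in (0:ℝ)..R, Real.cos (z * s + ε * s ^ N)) =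
        ∫ s in (0:ℝ)..R, Real.cos (φ s) := by rw [hφdef]
    rw [this, ← hsplit, hFTC R hR]
  apply Tendsto.congr' heq.symm
  have : Tendsto (fun R : ℝ => (∫ s in (0:ℝ)..a, Real.cos (φ s)) +
      (g R - g a + ∫ s in a..R, h s)) atTop
      (nhds ((∫ s in (0:ℝ)..a, Real.cos (φ s)) + (0 - g a + ∫ s in Ioi a, h s))) := by
    exact tendsto_const_nhds.add (((T1.sub tendsto_const_nhds).add T2))
  convert this using 2
  ring
end

section
/- Let N ≥ 2 be a natural number, κ ∈ {−1, 1}, and let A : ℝ → ℝ be an infinitely differentiable function satisfying A^{(N−1)}(w) = −(κ/N) · w · A(w) for all w ∈ ℝ. Fix y ∈ ℝ and define v(x, t) = t^{−1/N} · A((x − y) · t^{−1/N}) for x ∈ ℝ and t > 0. Then v satisfies the higher-order heat equation ∂v/∂t (x, t) = κ · (∂^N v/∂x^N)(x, t) for all x ∈ ℝ and all t > 0. -/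
/-- Let `N ≥ 2`, `κ ∈ {-1, 1}`, and let `A : ℝ → ℝ` be a smooth function satisfying the
higher-order Airy equation `A^{(N-1)}(w) = -(κ/N) w A(w)`. Then the self-similar function
`v(x, t) = t^{-1/N} A((x - y) t^{-1/N})` satisfies the higher-order heat equation
`∂_t v = κ ∂_x^N v` for all `x ∈ ℝ` and `t > 0`. -/
theorem stmt_5 (N : ℕ) (hN : 2 ≤ N) (κ : ℝ) (hκ : κ = -1 ∨ κ = 1)
    (A : ℝ → ℝ) (hA : ContDiff ℝ (⊤ : ℕ∞) A)
    (hAiry : ∀ w : ℝ, iteratedDeriv (N - 1) A w = -(κ / (N : ℝ)) * w * A w)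
    (y : ℝ) (v : ℝ → ℝ → ℝ)
    (hv : ∀ x t : ℝ, v x t = t ^ (-(1:ℝ) / (N : ℝ)) * A ((x - y) * t ^ (-(1:ℝ) / (N : ℝ)))) :
    ∀ x t : ℝ, 0 < t →
      deriv (fun t' => v x t') t = κ * iteratedDeriv N (fun x' => v x' t) x := by
  intro x t ht
  have hNR : (0:ℝ) < (N : ℝ) := by positivity
  set α : ℝ := -(1:ℝ)/(N:ℝ) with hα
  set s : ℝ := t ^ α with hs
  set w : ℝ := (x - y) * s with hw
  set c : ℝ := -(y * s) with hc
  have hA1 : Differentiable ℝ A := hA.differentiable (by simp)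
  have hAN : ContDiff ℝ (N : ℕ∞) A := hA.of_le (mod_cast le_top)
  -- iterated derivative of A
  have hiterA : ∀ u : ℝ, iteratedDeriv N A u
      = -(κ/(N:ℝ)) * A u + -(κ/(N:ℝ)) * u * deriv A u := by
    intro u
    have hN' : N = (N - 1) + 1 := (Nat.succ_pred_eq_of_pos (by omega)).symm
    have h0 : iteratedDeriv ((N-1)+1) A = deriv (fun z : ℝ => -(κ/(N:ℝ)) * z * A z) := by
      rw [iteratedDeriv_succ]
      exact congrArg deriv (funext hAiry)
    rw [← hN'] at h0
    rw [h0]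
    have h1 : HasDerivAt (fun z : ℝ => -(κ/(N:ℝ)) * z) (-(κ/(N:ℝ))) u := by
      simpa using (hasDerivAt_id u).const_mul (-(κ/(N:ℝ)))
    have := (h1.mul (hA1 u).hasDerivAt).deriv
    rw [show (fun z : ℝ => -(κ/(N:ℝ)) * z * A z) = (fun z : ℝ => -(κ/(N:ℝ)) * z) * A from rfl, this]
  -- RHS
  have hshift : ContDiff ℝ (N : ℕ∞) (fun z : ℝ => A (z + c)) :=
    hAN.comp (contDiff_id.add contDiff_const)
  have hfc : ContDiff ℝ (N : ℕ∞) (fun z : ℝ => s * A (z + c)) :=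
    contDiff_const.mul hshift
  have e1 : (fun x' => v x' t) = fun x' => (fun z : ℝ => s * A (z + c)) (s * x') := by
    funext x'
    rw [hv x' t, ← hs]
    congr 1
    rw [hc]; ring
  have e2 : iteratedDeriv N (fun z : ℝ => s * A (z + c)) (s * x)
      = s * iteratedDeriv N (fun z : ℝ => A (z + c)) (s * x) := by
    have hsm : (fun z : ℝ => s * A (z + c)) = s • (fun z : ℝ => A (z + c)) := by
      funext z; simp
    rw [hsm]
    simp only [← iteratedDerivWithin_univ]
    exact iteratedDerivWithin_const_smul (Set.mem_univ _) uniqueDiffOn_univ s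
      (by exact_mod_cast hshift.contDiffAt.contDiffWithinAt)
  have hiterRHS : iteratedDeriv N (fun x' => v x' t) x
      = s * (s ^ N * iteratedDeriv N A w) := by
    rw [e1]
    have E := congrFun (iteratedDeriv_comp_const_mul (by exact_mod_cast hfc) s) x
    rw [E, e2, congrFun (iteratedDeriv_comp_add_const N A c) (s * x)]
    have : s * x + c = w := by rw [hc, hw]; ring
    rw [this]
    ring
  -- LHS
  have hd1 : HasDerivAt (fun t' : ℝ => t' ^ α) (α * t ^ (α - 1)) t :=
    Real.hasDerivAt_rpow_const (Or.inl ht.ne')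
  have hinner : HasDerivAt (fun t' : ℝ => (x - y) * t' ^ α) ((x - y) * (α * t ^ (α - 1))) t :=
    hd1.const_mul (x - y)
  have hd2 : HasDerivAt (fun t' : ℝ => A ((x - y) * t' ^ α))
      (deriv A w * ((x - y) * (α * t ^ (α - 1)))) t :=
    (hA1 w).hasDerivAt.comp t hinner
  have hLHS : deriv (fun t' => v x t') t
      = α * t ^ (α - 1) * A w + s * (deriv A w * ((x - y) * (α * t ^ (α - 1)))) := by
    have : (fun t' => v x t') = fun t' => t' ^ α * A ((x - y) * t' ^ α) := by
      funext t'; rw [hv]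
    rw [this]
    exact (hd1.mul hd2).deriv
  rw [hLHS, hiterRHS, hiterA]
  -- algebraic identities
  have hsN : s ^ N = t⁻¹ := by
    rw [hs, ← Real.rpow_natCast (t ^ α) N, ← Real.rpow_mul ht.le]
    have : α * (N:ℝ) = -1 := by rw [hα]; field_simp
    rw [this, Real.rpow_neg_one]
  have hta : t ^ (α - 1) = s * t⁻¹ := by
    rw [hs, ← Real.rpow_neg_one t, ← Real.rpow_add ht]
    congr 1
  rw [hsN, hta, hw, hα]
  rcases hκ with h | h <;> subst h <;> field_simp <;> ring
end

section
/- Let k be a nonnegative integer and let F : ℝ² → ℝ be infinitely differentiable. Define H(x, y) = ∫_0^1 u^k · F(y + u(x − y), y) du. Then H is infinitely differentiable on ℝ², it satisfies the transport equation (k + 1) H(x, y) + (x − y) · ∂H/∂x (x, y) = F(x, y) for all (x, y) ∈ ℝ², and it is the unique infinitely differentiable function on ℝ² satisfying this equation. -/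
open MeasureTheory Convolution Set Metric intervalIntegral

/-- A smooth bump function equal to `1` on `[0,1]`. -/
noncomputable def stmt7Psi : ContDiffBump (1/2 : ℝ) := ⟨1, 2, one_pos, one_lt_two⟩

/-- Smoothness of the parametric integral, via parametric convolution. -/
lemma stmt7_smooth (k : ℕ) (F : ℝ → ℝ → ℝ)
    (hF : ContDiff ℝ (⊤ : ℕ∞) (fun p : ℝ × ℝ => F p.1 p.2)) :
    ContDiff ℝ (⊤ : ℕ∞)
      (fun p : ℝ × ℝ => ∫ u in (0:ℝ)..1, u ^ k * F (p.2 + u * (p.1 - p.2)) p.2) := by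
  set g : (ℝ × ℝ) → ℝ → ℝ :=
    fun p u => stmt7Psi u * (u ^ k * F (p.2 + u * (p.1 - p.2)) p.2) with hg
  have hgsm : ContDiffOn ℝ (⊤ : ℕ∞) (↿g) ((univ : Set (ℝ×ℝ)) ×ˢ univ) := by
    apply ContDiff.contDiffOn
    have h1 : ContDiff ℝ (⊤:ℕ∞) (fun q : (ℝ×ℝ)×ℝ => stmt7Psi q.2) :=
      stmt7Psi.contDiff.comp contDiff_snd
    have h2 : ContDiff ℝ (⊤:ℕ∞) (fun q : (ℝ×ℝ)×ℝ =>
        F (q.1.2 + q.2 * (q.1.1 - q.1.2)) q.1.2) := by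
      have := hF.comp (f := fun q : (ℝ×ℝ)×ℝ =>
        ((q.1.2 + q.2 * (q.1.1 - q.1.2), q.1.2) : ℝ×ℝ)) ?_
      · exact this
      · fun_prop
    exact h1.mul ((contDiff_snd.pow k).mul h2)
  have key : ContDiffOn ℝ (⊤ : ℕ∞)
      (fun p : ℝ×ℝ => ((Set.indicator (Icc (0:ℝ) 1) (fun _ => (1:ℝ)))
        ⋆[ContinuousLinearMap.mul ℝ ℝ] g p) ((fun _ : ℝ×ℝ => (1:ℝ)) p)) univ := by
    apply contDiffOn_convolution_right_with_param_comp (ContinuousLinearMap.mul ℝ ℝ)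
      (contDiffOn_const) isOpen_univ (isCompact_closedBall (1/2:ℝ) 2)
    · intro p u _ hu
      have : stmt7Psi u = 0 := by
        have : u ∉ Function.support (stmt7Psi : ℝ → ℝ) := by
          rw [ContDiffBump.support_eq]
          exact fun h => hu (ball_subset_closedBall h)
        simpa [Function.mem_support, not_not] using this
      simp [hg, this]
    · exact (integrable_indicator_iff measurableSet_Icc |>.2
        (integrableOn_const measure_Icc_lt_top.ne)).locallyIntegrable
    · exact hgsm
  have heq : ∀ p : ℝ×ℝ,
      ((Set.indicator (Icc (0:ℝ) 1) (fun _ => (1:ℝ)))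
        ⋆[ContinuousLinearMap.mul ℝ ℝ] g p) 1
      = ∫ u in (0:ℝ)..1, u ^ k * F (p.2 + u * (p.1 - p.2)) p.2 := by
    intro p
    have conv_eq : ((Set.indicator (Icc (0:ℝ) 1) (fun _ => (1:ℝ)))
        ⋆[ContinuousLinearMap.mul ℝ ℝ] g p) 1 = ∫ u in (0:ℝ)..1, g p u := by
      rw [convolution]
      have e1 : (fun t => (ContinuousLinearMap.mul ℝ ℝ)
            (Set.indicator (Icc (0:ℝ) 1) (fun _ => (1:ℝ)) t) (g p (1 - t)))
          = Set.indicator (Icc (0:ℝ) 1) (fun t => g p (1 - t)) := by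
        funext t
        by_cases ht : t ∈ Icc (0:ℝ) 1 <;>
          simp [Set.indicator_of_mem, Set.indicator_of_notMem, ht]
      rw [e1, MeasureTheory.integral_indicator measurableSet_Icc, integral_Icc_eq_integral_Ioc,
        ← intervalIntegral.integral_of_le zero_le_one]
      have := intervalIntegral.integral_comp_sub_left (a := (0:ℝ)) (b := 1) (g p) 1
      simpa using this
    rw [conv_eq]
    apply intervalIntegral.integral_congr
    intro u hu
    have hmem : u ∈ closedBall (1/2 : ℝ) 1 := by
      rw [Set.uIcc_of_le zero_le_one] at hu
      rw [Metric.mem_closedBall, Real.dist_eq]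
      rw [abs_le]
      constructor <;> [linarith [hu.1]; linarith [hu.2]]
    rw [hg]
    simp [stmt7Psi.one_of_mem_closedBall hmem]
  have : (fun p : ℝ×ℝ => ∫ u in (0:ℝ)..1, u ^ k * F (p.2 + u * (p.1 - p.2)) p.2)
      = (fun p : ℝ×ℝ => ((Set.indicator (Icc (0:ℝ) 1) (fun _ => (1:ℝ)))
        ⋆[ContinuousLinearMap.mul ℝ ℝ] g p) ((fun _ : ℝ×ℝ => (1:ℝ)) p)) :=
    funext fun p => (heq p).symm
  rw [this, ← contDiffOn_univ]
  exact key

/-- Change of variables `t = y + u (x - y)`, valid off the diagonal. -/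
lemma stmt7_cov (k : ℕ) (F : ℝ → ℝ → ℝ)
    (hF : ContDiff ℝ (⊤ : ℕ∞) (fun p : ℝ × ℝ => F p.1 p.2))
    (x y : ℝ) (hxy : x ≠ y) :
    (∫ u in (0:ℝ)..1, u ^ k * F (y + u * (x - y)) y)
      = ((x - y) ^ (k+1))⁻¹ * ∫ t in y..x, (t - y) ^ k * F t y := by
  have hc : Continuous (fun t => F t y) :=
    hF.continuous.comp (continuous_id.prodMk continuous_const)
  have hsub : (∫ u in (0:ℝ)..1, (x - y) •
        ((fun t => ((t - y)/(x-y)) ^ k * F t y) ∘ (fun u => y + u * (x - y))) u)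
      = ∫ t in (y + 0 * (x-y))..(y + 1 * (x-y)), ((t - y)/(x-y)) ^ k * F t y := by
    apply integral_comp_smul_deriv (f := fun u => y + u * (x - y)) (f' := fun _ => x - y)
    · intro u _
      simpa using ((hasDerivAt_id u).mul_const (x - y)).const_add y
    · exact continuousOn_const
    · exact ((continuous_id.sub continuous_const).div_const _ |>.pow k).mul hc
  have h0 : y + 0 * (x - y) = y := by ring
  have h1 : y + 1 * (x - y) = x := by ring
  rw [h0, h1] at hsub
  have hx : x - y ≠ 0 := sub_ne_zero.2 hxy
  calc (∫ u in (0:ℝ)..1, u ^ k * F (y + u * (x - y)) y)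
      = (x - y)⁻¹ * ∫ u in (0:ℝ)..1, (x - y) •
          ((fun t => ((t - y)/(x-y)) ^ k * F t y) ∘ (fun u => y + u * (x - y))) u := by
        rw [← intervalIntegral.integral_const_mul]
        apply intervalIntegral.integral_congr
        intro u _
        simp only [Function.comp, smul_eq_mul]
        field_simp
        rw [add_sub_cancel_left, mul_div_assoc, div_self hx, mul_one]
        ring
    _ = (x - y)⁻¹ * ∫ t in y..x, ((t - y)/(x-y)) ^ k * F t y := by rw [hsub]
    _ = ((x - y) ^ (k+1))⁻¹ * ∫ t in y..x, (t - y) ^ k * F t y := by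
        rw [← intervalIntegral.integral_const_mul, ← intervalIntegral.integral_const_mul]
        apply intervalIntegral.integral_congr
        intro t _
        simp only
        rw [div_pow, pow_succ, mul_inv, div_eq_mul_inv]
        ring

/-- The transport equation for the explicit integral. -/
lemma stmt7_transport (k : ℕ) (F : ℝ → ℝ → ℝ)
    (hF : ContDiff ℝ (⊤ : ℕ∞) (fun p : ℝ × ℝ => F p.1 p.2)) (x y : ℝ) :
    ((k : ℝ) + 1) * (∫ u in (0:ℝ)..1, u ^ k * F (y + u * (x - y)) y)
      + (x - y) * deriv (fun x' => ∫ u in (0:ℝ)..1, u ^ k * F (y + u * (x' - y)) y) x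
      = F x y := by
  by_cases hxy : x = y
  · subst hxy
    have : (∫ u in (0:ℝ)..1, u ^ k * F (x + u * (x - x)) x)
        = (∫ u in (0:ℝ)..1, u ^ k) * F x x := by
      rw [← intervalIntegral.integral_mul_const]
      apply intervalIntegral.integral_congr
      intro u _
      simp
    rw [this, integral_pow]
    have hk : (k : ℝ) + 1 ≠ 0 := by positivity
    rw [sub_self, zero_mul, add_zero]
    rw [one_pow, zero_pow (Nat.succ_ne_zero k)]
    field_simp
    ring
  · have hc : Continuous (fun t => (t - y) ^ k * F t y) := by
      have : Continuous (fun t => F t y) :=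
        hF.continuous.comp (continuous_id.prodMk continuous_const)
      exact ((continuous_id.sub continuous_const).pow k).mul this
    set J : ℝ → ℝ := fun x' => ∫ t in y..x', (t - y) ^ k * F t y with hJdef
    have hJ : HasDerivAt J ((x - y) ^ k * F x y) x := by
      apply intervalIntegral.integral_hasDerivAt_right
      · exact hc.intervalIntegrable _ _
      · exact hc.stronglyMeasurableAtFilter _ _
      · exact hc.continuousAt
    have hx : x - y ≠ 0 := sub_ne_zero.2 hxy
    have hpow : HasDerivAt (fun x' : ℝ => ((x' - y) ^ (k+1))⁻¹)
        (-(((k:ℝ)+1) * (x - y) ^ k * 1) / ((x - y) ^ (k+1)) ^ 2) x := by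
      have h1 : HasDerivAt (fun x' : ℝ => (x' - y) ^ (k+1))
          (((k:ℝ)+1) * (x - y) ^ k * 1) x := by
        have := ((hasDerivAt_id x).sub_const y).pow (k+1)
        simpa [Pi.pow_def] using this
      exact h1.inv (pow_ne_zero _ hx)
    have hprod : HasDerivAt (fun x' => ((x' - y) ^ (k+1))⁻¹ * J x')
        ((-(((k:ℝ)+1) * (x - y) ^ k * 1) / ((x - y) ^ (k+1)) ^ 2) * J x
          + ((x - y) ^ (k+1))⁻¹ * ((x - y) ^ k * F x y)) x := hpow.mul hJ
    have hev : (fun x' => ∫ u in (0:ℝ)..1, u ^ k * F (y + u * (x' - y)) y)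
        =ᶠ[nhds x] (fun x' => ((x' - y) ^ (k+1))⁻¹ * J x') := by
      filter_upwards [isOpen_compl_singleton.mem_nhds (by simpa using hxy)] with x' hx'
      exact stmt7_cov k F hF x' y hx'
    have hD : HasDerivAt (fun x' => ∫ u in (0:ℝ)..1, u ^ k * F (y + u * (x' - y)) y)
        ((-(((k:ℝ)+1) * (x - y) ^ k * 1) / ((x - y) ^ (k+1)) ^ 2) * J x
          + ((x - y) ^ (k+1))⁻¹ * ((x - y) ^ k * F x y)) x :=
      hprod.congr_of_eventuallyEq hev
    rw [stmt7_cov k F hF x y hxy, hD.deriv]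
    have hpne : (x - y) ^ (k+1) ≠ 0 := pow_ne_zero _ hx
    field_simp
    ring

/-- Uniqueness of smooth solutions of the transport equation. -/
lemma stmt7_unique (k : ℕ) (F G H : ℝ → ℝ → ℝ)
    (hG : ContDiff ℝ (⊤ : ℕ∞) (fun p : ℝ × ℝ => G p.1 p.2))
    (hHs : ContDiff ℝ (⊤ : ℕ∞) (fun p : ℝ × ℝ => H p.1 p.2))
    (hGeq : ∀ x y : ℝ, ((k : ℝ) + 1) * G x y + (x - y) * deriv (fun x' => G x' y) x = F x y)
    (hHeq : ∀ x y : ℝ, ((k : ℝ) + 1) * H x y + (x - y) * deriv (fun x' => H x' y) x = F x y)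
    (x y : ℝ) : G x y = H x y := by
  have hGd : ∀ y : ℝ, Differentiable ℝ (fun x' => G x' y) := fun y =>
    (hG.comp (contDiff_id.prodMk contDiff_const)).differentiable (by simp)
  have hHd : ∀ y : ℝ, Differentiable ℝ (fun x' => H x' y) := fun y =>
    (hHs.comp (contDiff_id.prodMk contDiff_const)).differentiable (by simp)
  set c := x - y with hc
  set f : ℝ → ℝ := fun u => u ^ (k+1) * (G (y + u * c) y - H (y + u * c) y) with hfdef
  have hf : ∀ u : ℝ, HasDerivAt f 0 u := by
    intro u
    set z := y + u * c with hz
    have hin : HasDerivAt (fun u : ℝ => y + u * c) c u := by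
      simpa using ((hasDerivAt_id u).mul_const c).const_add y
    have hGz : HasDerivAt (fun u : ℝ => G (y + u * c) y)
        (deriv (fun x' => G x' y) z * c) u := by
      have := (((hGd y) z).hasDerivAt).comp u hin
      exact this
    have hHz : HasDerivAt (fun u : ℝ => H (y + u * c) y)
        (deriv (fun x' => H x' y) z * c) u := by
      have := (((hHd y) z).hasDerivAt).comp u hin
      exact this
    have hmul : HasDerivAt f
        ((((k:ℝ)+1) * u ^ k) * (G z y - H z y)
          + u ^ (k+1) * (deriv (fun x' => G x' y) z * c
              - deriv (fun x' => H x' y) z * c)) u := by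
      have hp : HasDerivAt (fun u : ℝ => u ^ (k+1)) (((k:ℝ)+1) * u ^ k) u := by
        simpa using hasDerivAt_pow (k+1) u
      exact hp.mul (hGz.sub hHz)
    convert hmul using 1
    have e1 := hGeq z y
    have e2 := hHeq z y
    have hzy : z - y = u * c := by simp [hz]
    rw [hzy] at e1 e2
    linear_combination (-(u ^ k)) * e1 + (u ^ k) * e2
  have hdiff : Differentiable ℝ f := fun u => (hf u).differentiableAt
  have hconst : f 1 = f 0 := is_const_of_deriv_eq_zero hdiff (fun u => (hf u).deriv) 1 0
  have h0 : f 0 = 0 := by simp [hfdef]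
  have h1 : f 1 = G x y - H x y := by simp [hfdef, hc]
  have := hconst.trans h0
  rw [h1] at this
  linarith

/-- Let `k ∈ ℕ` and let `F : ℝ² → ℝ` be smooth. Then
`H(x, y) = ∫_0^1 u^k F(y + u(x - y), y) du` is smooth on `ℝ²`, satisfies the transport
equation `(k + 1) H(x,y) + (x - y) ∂_x H(x,y) = F(x,y)`, and is the unique smooth function
on `ℝ²` satisfying this equation. -/
theorem stmt_7 (k : ℕ) (F : ℝ → ℝ → ℝ)
    (hF : ContDiff ℝ (⊤ : ℕ∞) (fun p : ℝ × ℝ => F p.1 p.2))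
    (H : ℝ → ℝ → ℝ)
    (hH : ∀ x y : ℝ, H x y = ∫ u in (0:ℝ)..1, u ^ k * F (y + u * (x - y)) y) :
    ContDiff ℝ (⊤ : ℕ∞) (fun p : ℝ × ℝ => H p.1 p.2) ∧
    (∀ x y : ℝ,
      ((k : ℝ) + 1) * H x y + (x - y) * deriv (fun x' => H x' y) x = F x y) ∧
    (∀ G : ℝ → ℝ → ℝ, ContDiff ℝ (⊤ : ℕ∞) (fun p : ℝ × ℝ => G p.1 p.2) →
      (∀ x y : ℝ,
        ((k : ℝ) + 1) * G x y + (x - y) * deriv (fun x' => G x' y) x = F x y) →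
      ∀ x y : ℝ, G x y = H x y) := by
  have hfun : (fun p : ℝ × ℝ => H p.1 p.2)
      = fun p : ℝ × ℝ => ∫ u in (0:ℝ)..1, u ^ k * F (p.2 + u * (p.1 - p.2)) p.2 :=
    funext fun p => hH p.1 p.2
  have hsmooth : ContDiff ℝ (⊤ : ℕ∞) (fun p : ℝ × ℝ => H p.1 p.2) := by
    rw [hfun]; exact stmt7_smooth k F hF
  have htrans : ∀ x y : ℝ,
      ((k : ℝ) + 1) * H x y + (x - y) * deriv (fun x' => H x' y) x = F x y := by
    intro x y
    have hfy : (fun x' => H x' y)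
        = fun x' => ∫ u in (0:ℝ)..1, u ^ k * F (y + u * (x' - y)) y :=
      funext fun x' => hH x' y
    rw [hH x y, hfy]
    exact stmt7_transport k F hF x y
  exact ⟨hsmooth, htrans, fun G hG hGeq x y =>
    stmt7_unique k F G H hG hsmooth hGeq htrans x y⟩
end

section
/- Let u₀ : ℝ → ℝ be infinitely differentiable, let H₁(x, y) = ∫_0^1 u₀(y + u(x − y)) du, and let H₂(x, y) = ∫_0^1 u · (∂_x² H₁ + u₀ · H₁)(y + u(x − y), y) du (the unique smooth solution of 2 H₂(x,y) + (x − y) ∂_x H₂(x,y) = ∂_x² H₁(x,y) + u₀(x) H₁(x,y)). Then for every nonnegative integer j and every x ∈ ℝ, the j-th partial derivative of H₂ with respect to x, evaluated at y = x, equals u₀^{(j+2)}(x)/((j+2)(j+3)) + (1/(j+2)) · Σ_{ℓ=0}^{j} (1/(ℓ+1)) · C(j, ℓ) · u₀^{(ℓ)}(x) · u₀^{(j−ℓ)}(x), where C(j, ℓ) is the binomial coefficient. In particular, H₂(x, x) = (u₀''(x) + 3 u₀(x)²)/6. -/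
open MeasureTheory intervalIntegral Metric Finset

noncomputable def Phi (f : ℝ → ℝ) (m : ℕ) (y x : ℝ) : ℝ :=
  ∫ u in (0:ℝ)..1, u ^ m * f (y + u * (x - y))

lemma Phi_hasDerivAt (f : ℝ → ℝ) (hf : ContDiff ℝ (⊤ : ℕ∞) f) (m : ℕ) (y x₀ : ℝ) :
    HasDerivAt (Phi f m y) (Phi (deriv f) (m + 1) y x₀) x₀ := by
  have hfc : Continuous f := hf.continuous
  have hderiv_cont : Continuous (deriv f) := hf.continuous_deriv (by exact_mod_cast le_top)
  set R : ℝ := |x₀ - y| + 1 with hR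
  obtain ⟨M, hM⟩ := (isCompact_Icc (a := y - R) (b := y + R)).exists_bound_of_continuousOn
    hderiv_cont.continuousOn
  -- membership lemma
  have hmem : ∀ u ∈ Set.uIoc (0:ℝ) 1, ∀ x ∈ ball x₀ 1,
      y + u * (x - y) ∈ Set.Icc (y - R) (y + R) := by
    intro u hu x hx
    rw [Set.uIoc_of_le (by norm_num : (0:ℝ) ≤ 1)] at hu
    have hu0 : 0 < u := hu.1
    have hu1 : u ≤ 1 := hu.2
    have hxx : |x - x₀| < 1 := by simpa [Real.dist_eq] using hx
    have : |u * (x - y)| ≤ R := by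
      rw [abs_mul]
      have h1 : |x - y| ≤ |x - x₀| + |x₀ - y| := abs_sub_le x x₀ y
      have h2 : |u| ≤ 1 := by rw [abs_of_pos hu0]; exact hu1
      calc |u| * |x - y| ≤ 1 * (|x - x₀| + |x₀ - y|) :=
            mul_le_mul h2 h1 (abs_nonneg _) (by norm_num)
        _ ≤ R := by rw [one_mul, hR]; linarith
    constructor <;> [linarith [neg_abs_le (u * (x-y)), neg_le_of_abs_le this]; skip]
    · linarith [le_abs_self (u * (x - y))]
  have key := intervalIntegral.hasDerivAt_integral_of_dominated_loc_of_deriv_le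
    (F := fun x u => u ^ m * f (y + u * (x - y)))
    (F' := fun x u => u ^ (m+1) * deriv f (y + u * (x - y)))
    (x₀ := x₀) (a := 0) (b := 1) (μ := volume) (bound := fun _ => |M|) (ball_mem_nhds x₀ one_pos)
    (Filter.Eventually.of_forall fun x => (Continuous.aestronglyMeasurable (by fun_prop)))
    ((Continuous.intervalIntegrable (by fun_prop)) 0 1)
    (Continuous.aestronglyMeasurable (by fun_prop))
    ?_ (intervalIntegrable_const) ?_
  · exact key.2
  · refine Filter.Eventually.of_forall fun u hu x hx => ?_
    have hmem' := hmem u hu x hx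
    have hu' : |u| ≤ 1 := by
      rw [Set.uIoc_of_le (by norm_num : (0:ℝ) ≤ 1)] at hu
      rw [abs_of_pos hu.1]; exact hu.2
    calc ‖u ^ (m+1) * deriv f (y + u * (x - y))‖
        = |u| ^ (m+1) * ‖deriv f (y + u * (x - y))‖ := by
          rw [norm_mul, norm_pow]; rfl
      _ ≤ 1 * |M| := by
          apply mul_le_mul (pow_le_one₀ (abs_nonneg u) hu')
            ((hM _ hmem').trans (le_abs_self M)) (norm_nonneg _) one_pos.le
      _ = |M| := one_mul _
  · refine Filter.Eventually.of_forall fun u hu x hx => ?_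
    have hinner : HasDerivAt (fun x => y + u * (x - y)) u x := by
      simpa using (((hasDerivAt_id x).sub_const y).const_mul u).const_add y
    have houter : HasDerivAt f (deriv f (y + u * (x - y))) (y + u * (x - y)) :=
      (hf.differentiable (by simp) _).hasDerivAt
    have : HasDerivAt (fun x => u ^ m * f (y + u * (x - y)))
        (u ^ m * (deriv f (y + u * (x - y)) * u)) x := (houter.comp x hinner).const_mul (u ^ m)
    refine this.congr_deriv ?_
    ring

lemma Phi_deriv (f : ℝ → ℝ) (hf : ContDiff ℝ (⊤ : ℕ∞) f) (m : ℕ) (y : ℝ) :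
    deriv (Phi f m y) = Phi (deriv f) (m + 1) y :=
  funext fun x => (Phi_hasDerivAt f hf m y x).deriv

lemma Phi_iteratedDeriv (j : ℕ) : ∀ (f : ℝ → ℝ), ContDiff ℝ (⊤ : ℕ∞) f → ∀ (m : ℕ) (y : ℝ),
    iteratedDeriv j (Phi f m y) = Phi (iteratedDeriv j f) (m + j) y := by
  induction j with
  | zero => intro f hf m y; simp
  | succ j ih =>
    intro f hf m y
    rw [iteratedDeriv_succ', Phi_deriv f hf m y,
      ih (deriv f) (contDiff_infty_iff_deriv.mp hf).2 (m+1) y, ← iteratedDeriv_succ']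
    have : m + 1 + j = m + (j + 1) := by omega
    rw [this]

lemma Phi_contDiff_nat (n : ℕ) : ∀ (f : ℝ → ℝ), ContDiff ℝ (⊤ : ℕ∞) f → ∀ (m : ℕ) (y : ℝ),
    ContDiff ℝ n (Phi f m y) := by
  induction n with
  | zero =>
    intro f hf m y
    exact contDiff_zero.mpr (continuous_iff_continuousAt.mpr
      fun x => (Phi_hasDerivAt f hf m y x).differentiableAt.continuousAt)
  | succ n ih =>
    intro f hf m y
    have : ((n + 1 : ℕ) : WithTop ℕ∞) = (n : WithTop ℕ∞) + 1 := by push_cast; ring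
    rw [this, contDiff_succ_iff_deriv]
    refine ⟨fun x => (Phi_hasDerivAt f hf m y x).differentiableAt, by simp, ?_⟩
    rw [Phi_deriv f hf m y]
    exact ih (deriv f) (contDiff_infty_iff_deriv.mp hf).2 (m+1) y

lemma Phi_contDiff (f : ℝ → ℝ) (hf : ContDiff ℝ (⊤ : ℕ∞) f) (m : ℕ) (y : ℝ) :
    ContDiff ℝ (⊤ : ℕ∞) (Phi f m y) := by
  exact contDiff_infty.mpr fun n => Phi_contDiff_nat n f hf m y

lemma Phi_diag (f : ℝ → ℝ) (m : ℕ) (y : ℝ) : Phi f m y y = f y / (m + 1) := by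
  simp only [Phi, sub_self, mul_zero, add_zero]
  rw [intervalIntegral.integral_mul_const, integral_pow]
  simp; ring

lemma iteratedDeriv_add' (n : ℕ) (f g : ℝ → ℝ) (hf : ContDiff ℝ (⊤ : ℕ∞) f)
    (hg : ContDiff ℝ (⊤ : ℕ∞) g) (x : ℝ) :
    iteratedDeriv n (fun t => f t + g t) x = iteratedDeriv n f x + iteratedDeriv n g x := by
  have h1 : ContDiffOn ℝ n f Set.univ := (hf.of_le (by exact_mod_cast le_top)).contDiffOn
  have h2 : ContDiffOn ℝ n g Set.univ := (hg.of_le (by exact_mod_cast le_top)).contDiffOn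
  simp only [← iteratedDerivWithin_univ]
  exact iteratedDerivWithin_add (Set.mem_univ x) uniqueDiffOn_univ (h1 x (Set.mem_univ x)) (h2 x (Set.mem_univ x))

lemma pascal_sum (a b : ℕ → ℝ) (n : ℕ) :
    (∑ ℓ ∈ range (n+1), (n.choose ℓ : ℝ) * a (ℓ+1) * b (n-ℓ)) +
      (∑ ℓ ∈ range (n+1), (n.choose ℓ : ℝ) * a ℓ * b (n-ℓ+1)) =
    ∑ ℓ ∈ range (n+2), ((n+1).choose ℓ : ℝ) * a ℓ * b (n+1-ℓ) := by
  rw [Finset.sum_range_succ' (fun ℓ => ((n+1).choose ℓ : ℝ) * a ℓ * b (n+1-ℓ)) (n+1)]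
  have h1 : ∀ ℓ ∈ range (n+1), ((n+1).choose (ℓ+1) : ℝ) * a (ℓ+1) * b (n+1-(ℓ+1)) =
      (n.choose ℓ : ℝ) * a (ℓ+1) * b (n-ℓ) + (n.choose (ℓ+1) : ℝ) * a (ℓ+1) * b (n-ℓ) := by
    intro ℓ hℓ
    rw [Nat.choose_succ_succ]
    simp only [Nat.succ_eq_add_one]
    push_cast
    ring
  rw [Finset.sum_congr rfl h1, Finset.sum_add_distrib]
  have h2 : (∑ ℓ ∈ range (n+1), (n.choose (ℓ+1) : ℝ) * a (ℓ+1) * b (n-ℓ)) +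
      ((n+1).choose 0 : ℝ) * a 0 * b (n+1-0) =
      ∑ ℓ ∈ range (n+1), (n.choose ℓ : ℝ) * a ℓ * b (n-ℓ+1) := by
    rw [Finset.sum_range_succ' (fun ℓ => (n.choose ℓ : ℝ) * a ℓ * b (n-ℓ+1)) n,
      Finset.sum_range_succ]
    have e1 : ∀ ℓ ∈ range n, (n.choose (ℓ+1) : ℝ) * a (ℓ+1) * b (n-(ℓ+1)+1) =
        (n.choose (ℓ+1) : ℝ) * a (ℓ+1) * b (n-ℓ) := by
      intro ℓ hℓ
      simp only [mem_range] at hℓ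
      congr 2
      omega
    rw [Finset.sum_congr rfl e1]
    simp [Nat.choose_succ_self]
  rw [add_assoc, h2]

lemma leibniz : ∀ (n : ℕ) (f g : ℝ → ℝ), ContDiff ℝ (⊤ : ℕ∞) f → ContDiff ℝ (⊤ : ℕ∞) g →
    ∀ x : ℝ, iteratedDeriv n (fun t => f t * g t) x =
      ∑ ℓ ∈ range (n+1), (n.choose ℓ : ℝ) * iteratedDeriv ℓ f x * iteratedDeriv (n-ℓ) g x := by
  intro n
  induction n with
  | zero => intro f g hf hg x; simp
  | succ n ih =>
    intro f g hf hg x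
    have hf' : ContDiff ℝ (⊤ : ℕ∞) (deriv f) := (contDiff_infty_iff_deriv.mp hf).2
    have hg' : ContDiff ℝ (⊤ : ℕ∞) (deriv g) := (contDiff_infty_iff_deriv.mp hg).2
    have hD : deriv (fun t => f t * g t) = fun t => deriv f t * g t + f t * deriv g t := by
      funext t
      exact deriv_fun_mul (hf.differentiable (by simp) t)
        (hg.differentiable (by simp) t)
    rw [iteratedDeriv_succ', hD,
      iteratedDeriv_add' n _ _ (hf'.mul hg) (hf.mul hg') x,
      ih _ _ hf' hg x, ih _ _ hf hg' x]
    have e1 : ∀ ℓ ∈ range (n+1), (n.choose ℓ : ℝ) * iteratedDeriv ℓ (deriv f) x *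
        iteratedDeriv (n-ℓ) g x =
        (n.choose ℓ : ℝ) * iteratedDeriv (ℓ+1) f x * iteratedDeriv (n-ℓ) g x := by
      intro ℓ _; rw [← iteratedDeriv_succ']
    have e2 : ∀ ℓ ∈ range (n+1), (n.choose ℓ : ℝ) * iteratedDeriv ℓ f x *
        iteratedDeriv (n-ℓ) (deriv g) x =
        (n.choose ℓ : ℝ) * iteratedDeriv ℓ f x * iteratedDeriv (n-ℓ+1) g x := by
      intro ℓ _; rw [← iteratedDeriv_succ']
    rw [Finset.sum_congr rfl e1, Finset.sum_congr rfl e2]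
    exact pascal_sum (fun ℓ => iteratedDeriv ℓ f x) (fun ℓ => iteratedDeriv ℓ g x) n

/-- For smooth `u₀`, with `H₁(x,y) = ∫_0^1 u₀(y + u(x-y)) du` and
`H₂(x,y) = ∫_0^1 u (∂_x² H₁ + u₀ H₁)(y + u(x-y), y) du` (the unique smooth solution of
`2 H₂ + (x-y) ∂_x H₂ = ∂_x² H₁ + u₀ H₁`), the `j`-th partial derivative of `H₂` in `x` on
the diagonal equals
`u₀^{(j+2)}(x)/((j+2)(j+3)) + (1/(j+2)) Σ_{ℓ=0}^{j} (1/(ℓ+1)) C(j,ℓ) u₀^{(ℓ)}(x) u₀^{(j-ℓ)}(x)`;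
in particular `H₂(x,x) = (u₀''(x) + 3 u₀(x)²)/6`. -/
theorem stmt_9 (u₀ : ℝ → ℝ) (hu₀ : ContDiff ℝ (⊤ : ℕ∞) u₀)
    (H₁ H₂ : ℝ → ℝ → ℝ)
    (hH₁ : ∀ x y : ℝ, H₁ x y = ∫ u in (0:ℝ)..1, u₀ (y + u * (x - y)))
    (hH₂ : ∀ x y : ℝ, H₂ x y = ∫ u in (0:ℝ)..1, u *
      (iteratedDeriv 2 (fun x' => H₁ x' y) (y + u * (x - y)) +
        u₀ (y + u * (x - y)) * H₁ (y + u * (x - y)) y)) :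
    (∀ (j : ℕ) (x : ℝ),
      iteratedDeriv j (fun x' => H₂ x' x) x =
        iteratedDeriv (j + 2) u₀ x / (((j : ℝ) + 2) * ((j : ℝ) + 3)) +
          (1 / ((j : ℝ) + 2)) * ∑ ℓ ∈ Finset.range (j + 1),
            (1 / ((ℓ : ℝ) + 1)) * (j.choose ℓ : ℝ) *
              iteratedDeriv ℓ u₀ x * iteratedDeriv (j - ℓ) u₀ x) ∧
    (∀ x : ℝ, H₂ x x = (iteratedDeriv 2 u₀ x + 3 * u₀ x ^ 2) / 6) := by
  have hA : ∀ y : ℝ, (fun x' => H₁ x' y) = Phi u₀ 0 y := by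
    intro y; funext x; rw [hH₁]; simp [Phi]
  have hu₀2 : ContDiff ℝ (⊤:ℕ∞) (iteratedDeriv 2 u₀) := by
    rw [iteratedDeriv_eq_iterate]; exact hu₀.iterate_deriv 2
  have hFcd : ∀ y, ContDiff ℝ (⊤:ℕ∞)
      (fun t => Phi (iteratedDeriv 2 u₀) 2 y t + u₀ t * Phi u₀ 0 y t) := fun y =>
    (Phi_contDiff _ hu₀2 2 y).add (hu₀.mul (Phi_contDiff _ hu₀ 0 y))
  have hB : ∀ y : ℝ, (fun x' => H₂ x' y) =
      Phi (fun t => Phi (iteratedDeriv 2 u₀) 2 y t + u₀ t * Phi u₀ 0 y t) 1 y := by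
    intro y; funext x
    rw [hH₂, Phi]
    congr 1
    funext u
    rw [hA y, Phi_iteratedDeriv 2 u₀ hu₀ 0 y]
    norm_num
    exact Or.inl (Or.inl (congrFun (hA y) _))
  have main : ∀ (j : ℕ) (x : ℝ),
      iteratedDeriv j (fun x' => H₂ x' x) x =
        iteratedDeriv (j + 2) u₀ x / (((j : ℝ) + 2) * ((j : ℝ) + 3)) +
          (1 / ((j : ℝ) + 2)) * ∑ ℓ ∈ Finset.range (j + 1),
            (1 / ((ℓ : ℝ) + 1)) * (j.choose ℓ : ℝ) *
              iteratedDeriv ℓ u₀ x * iteratedDeriv (j - ℓ) u₀ x := by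
    intro j x
    rw [hB x, Phi_iteratedDeriv j _ (hFcd x) 1 x, Phi_diag]
    -- split the iterated derivative of the sum
    have hsplit : iteratedDeriv j
        (fun t => Phi (iteratedDeriv 2 u₀) 2 x t + u₀ t * Phi u₀ 0 x t) x =
        iteratedDeriv (j+2) u₀ x / (((2+j : ℕ) : ℝ) + 1) +
        ∑ ℓ ∈ range (j+1), (j.choose ℓ : ℝ) * iteratedDeriv ℓ u₀ x *
          (iteratedDeriv (j-ℓ) u₀ x / (((0+(j-ℓ) : ℕ) : ℝ) + 1)) := by
      rw [iteratedDeriv_add' j _ _ (Phi_contDiff _ hu₀2 2 x)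
        (hu₀.mul (Phi_contDiff u₀ hu₀ 0 x)) x]
      congr 1
      · rw [Phi_iteratedDeriv j _ hu₀2 2 x, Phi_diag]
        congr 1
        simp only [iteratedDeriv_eq_iterate]
        rw [← Function.iterate_add_apply]
      · rw [leibniz j u₀ (Phi u₀ 0 x) hu₀ (Phi_contDiff u₀ hu₀ 0 x) x]
        refine Finset.sum_congr rfl fun ℓ hℓ => ?_
        rw [Phi_iteratedDeriv (j-ℓ) u₀ hu₀ 0 x, Phi_diag]
    rw [hsplit]
    -- reflect the sum
    have hS : (∑ ℓ ∈ range (j+1), (j.choose ℓ : ℝ) * iteratedDeriv ℓ u₀ x *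
          (iteratedDeriv (j-ℓ) u₀ x / (((0+(j-ℓ) : ℕ) : ℝ) + 1))) =
        ∑ ℓ ∈ range (j+1), (1 / ((ℓ : ℝ) + 1)) * (j.choose ℓ : ℝ) *
          iteratedDeriv ℓ u₀ x * iteratedDeriv (j-ℓ) u₀ x := by
      rw [← Finset.sum_range_reflect (fun ℓ => (1 / ((ℓ : ℝ) + 1)) * (j.choose ℓ : ℝ) *
          iteratedDeriv ℓ u₀ x * iteratedDeriv (j-ℓ) u₀ x) (j+1)]
      refine Finset.sum_congr rfl fun ℓ hℓ => ?_
      simp only [mem_range] at hℓ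
      have hℓj : ℓ ≤ j := by omega
      have e1 : j + 1 - 1 - ℓ = j - ℓ := by omega
      have e2 : j - (j - ℓ) = ℓ := by omega
      have e3 : j.choose (j - ℓ) = j.choose ℓ := Nat.choose_symm hℓj
      rw [e1, e2, e3]
      push_cast [Nat.zero_add]
      ring
    rw [hS]
    have hj2 : ((j : ℝ) + 2) ≠ 0 := by positivity
    have hj3 : ((j : ℝ) + 3) ≠ 0 := by positivity
    push_cast
    field_simp
    ring
  refine ⟨main, fun x => ?_⟩
  have h0 := main 0 x
  rw [iteratedDeriv_zero] at h0
  rw [h0]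
  simp only [Finset.sum_range_one, Nat.choose_self, Nat.cast_one, iteratedDeriv_zero,
    Nat.zero_sub, Nat.cast_zero]
  norm_num
  ring
end

section
/- Let u₀, u₁ : ℝ → ℝ be infinitely differentiable. Define H₁¹(x, y) = ∫_0^1 u₁(y + u(x − y)) du (the unique smooth solution of H(x,y) + (x−y) ∂_x H(x,y) = u₁(x)), and define H₁⁰(x, y) = ∫_0^1 F₀(y + u(x − y), y) du where F₀(x, y) = u₀(x) − (x − y) ∂_x² H₁¹(x,y) − ∂_x H₁¹(x,y) − (x − y) u₁(x) H₁¹(x,y)/3 (so H₁⁰ is the unique smooth solution of H + (x−y) ∂_x H = F₀). Then for every x ∈ ℝ: (a) the j-th partial derivative of H₁¹ with respect to x at y = x equals u₁^{(j)}(x)/(j+1) for every nonnegative integer j; (b) H₁⁰(x, x) = u₀(x) − u₁'(x)/2; and (c) the partial derivative of H₁⁰ with respect to x at y = x equals u₀'(x)/2 − u₁''(x)/3 − u₁(x)²/6. -/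
open MeasureTheory intervalIntegral Set

private lemma key_hasDerivAt (f f' : ℝ → ℝ) (hf : ∀ t, HasDerivAt f (f' t) t)
    (hf'c : Continuous f') (j : ℕ) (y x : ℝ) :
    HasDerivAt (fun x' => ∫ u in (0:ℝ)..1, u ^ j * f (y + u * (x' - y)))
      (∫ u in (0:ℝ)..1, u ^ j * (u * f' (y + u * (x - y)))) x := by
  have hfc : Continuous f := by
    have : Differentiable ℝ f := fun t => (hf t).differentiableAt
    exact this.continuous
  obtain ⟨M, hM⟩ := (isCompact_closedBall y (|x - y| + 1)).exists_bound_of_continuousOn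
    hf'c.continuousOn
  have main := intervalIntegral.hasDerivAt_integral_of_dominated_loc_of_deriv_le
    (F := fun x' u => u ^ j * f (y + u * (x' - y)))
    (F' := fun x' u => u ^ j * (u * f' (y + u * (x' - y))))
    (x₀ := x) (a := (0:ℝ)) (b := 1) (bound := fun _ => M) (μ := volume) (s := Metric.ball x 1) (Metric.ball_mem_nhds x one_pos)
    ?meas ?int ?meas' ?bound ?bint ?diff
  · exact main.2
  case meas =>
    refine Filter.Eventually.of_forall fun x' => Continuous.aestronglyMeasurable ?_
    exact (continuous_pow j).mul (hfc.comp (by continuity))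
  case int =>
    exact ((continuous_pow j).mul (hfc.comp (by continuity))).intervalIntegrable 0 1
  case meas' =>
    refine Continuous.aestronglyMeasurable ?_
    exact (continuous_pow j).mul (continuous_id.mul (hf'c.comp (by continuity)))
  case bound =>
    refine Filter.Eventually.of_forall fun u hu x' hx' => ?_
    rw [Set.uIoc_of_le (by norm_num : (0:ℝ) ≤ 1)] at hu
    have hu0 : 0 < u := hu.1
    have hu1 : u ≤ 1 := hu.2
    have hmem : y + u * (x' - y) ∈ Metric.closedBall y (|x - y| + 1) := by
      rw [Metric.mem_closedBall]
      have : dist (y + u * (x' - y)) y = u * |x' - y| := by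
        rw [Real.dist_eq]
        simp [abs_mul, abs_of_pos hu0]
      rw [this]
      have h1 : |x' - y| ≤ |x' - x| + |x - y| := abs_sub_le x' x y
      have h2 : |x' - x| < 1 := by
        rw [Metric.mem_ball, Real.dist_eq] at hx'; exact hx'
      nlinarith [abs_nonneg (x' - y), mul_le_of_le_one_left (abs_nonneg (x' - y)) hu1]
    calc ‖u ^ j * (u * f' (y + u * (x' - y)))‖
        = u ^ j * u * ‖f' (y + u * (x' - y))‖ := by
          rw [norm_mul, norm_mul]
          simp [abs_of_pos hu0, abs_of_pos (pow_pos hu0 j), mul_assoc]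
      _ ≤ 1 * ‖f' (y + u * (x' - y))‖ := by
          apply mul_le_mul_of_nonneg_right _ (norm_nonneg _)
          calc u ^ j * u ≤ 1 * 1 := by
                apply mul_le_mul (pow_le_one₀ hu0.le hu1) hu1 hu0.le zero_le_one
            _ = 1 := by ring
      _ ≤ M := by rw [one_mul]; exact hM _ hmem
  case bint => exact intervalIntegrable_const
  case diff =>
    refine Filter.Eventually.of_forall fun u hu x' hx' => ?_
    have hinner : HasDerivAt (fun x' => y + u * (x' - y)) u x' := by
      simpa using (((hasDerivAt_id x').sub_const y).const_mul u).const_add y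
    have := ((hf (y + u * (x' - y))).comp x' hinner).const_mul (u ^ j)
    have e : u ^ j * (u * f' (y + u * (x' - y))) = u ^ j * (f' (y + u * (x' - y)) * u) := by ring
    rw [e]; exact this

private lemma hle1 : (1 : WithTop ℕ∞) ≤ ((⊤ : ℕ∞) : WithTop ℕ∞) := by
  exact_mod_cast le_top

private lemma iter_formula (f : ℝ → ℝ) (hf : ContDiff ℝ (⊤ : ℕ∞) f) (y : ℝ) : ∀ (j : ℕ),
    iteratedDeriv j (fun x => ∫ u in (0:ℝ)..1, f (y + u * (x - y))) =
      fun x => ∫ u in (0:ℝ)..1, u ^ j * iteratedDeriv j f (y + u * (x - y)) := by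
  intro j
  induction j with
  | zero => funext x; simp
  | succ j ih =>
    have hsm : ∀ k : ℕ, ContDiff ℝ (⊤ : ℕ∞) (iteratedDeriv k f) := by
      intro k
      rw [iteratedDeriv_eq_iterate]
      exact hf.iterate_deriv k
    have hder : ∀ t, HasDerivAt (iteratedDeriv j f) (iteratedDeriv (j+1) f t) t := by
      intro t
      rw [iteratedDeriv_succ]
      exact ((hsm j).differentiable (by simp) t).hasDerivAt
    have hcont : Continuous (iteratedDeriv (j+1) f) := (hsm (j+1)).continuous
    funext x
    rw [iteratedDeriv_succ, ih]
    rw [(key_hasDerivAt (iteratedDeriv j f) (iteratedDeriv (j+1) f) hder hcont j y x).deriv]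
    apply intervalIntegral.integral_congr
    intro u _
    simp only [pow_succ]
    ring

private lemma diag_integral (c : ℝ) (j : ℕ) :
    ∫ u in (0:ℝ)..1, u ^ j * c = c / ((j : ℝ) + 1) := by
  rw [intervalIntegral.integral_mul_const, integral_pow]
  have : ((j : ℝ) + 1) ≠ 0 := by positivity
  field_simp
  simp

/-- For smooth `u₀, u₁`, with `H₁¹(x,y) = ∫_0^1 u₁(y + u(x-y)) du` (unique smooth solution
of `H + (x-y) ∂_x H = u₁(x)`), and `H₁⁰(x,y) = ∫_0^1 F₀(y + u(x-y), y) du` where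
`F₀(x,y) = u₀(x) - (x-y) ∂_x² H₁¹(x,y) - ∂_x H₁¹(x,y) - (x-y) u₁(x) H₁¹(x,y)/3`
(unique smooth solution of `H + (x-y) ∂_x H = F₀`), one has:
(a) `∂_x^j H₁¹` on the diagonal equals `u₁^{(j)}(x)/(j+1)`;
(b) `H₁⁰(x,x) = u₀(x) - u₁'(x)/2`;
(c) `∂_x H₁⁰` on the diagonal equals `u₀'(x)/2 - u₁''(x)/3 - u₁(x)²/6`. -/
theorem stmt_10 (u₀ u₁ : ℝ → ℝ)
    (hu₀ : ContDiff ℝ (⊤ : ℕ∞) u₀) (hu₁ : ContDiff ℝ (⊤ : ℕ∞) u₁)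
    (H11 H10 F₀ : ℝ → ℝ → ℝ)
    (hH11 : ∀ x y : ℝ, H11 x y = ∫ u in (0:ℝ)..1, u₁ (y + u * (x - y)))
    (hF₀ : ∀ x y : ℝ, F₀ x y = u₀ x - (x - y) * iteratedDeriv 2 (fun x' => H11 x' y) x -
      deriv (fun x' => H11 x' y) x - (x - y) * u₁ x * H11 x y / 3)
    (hH10 : ∀ x y : ℝ, H10 x y = ∫ u in (0:ℝ)..1, F₀ (y + u * (x - y)) y) :
    (∀ (j : ℕ) (x : ℝ),
      iteratedDeriv j (fun x' => H11 x' x) x = iteratedDeriv j u₁ x / ((j : ℝ) + 1)) ∧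
    (∀ x : ℝ, H10 x x = u₀ x - deriv u₁ x / 2) ∧
    (∀ x : ℝ, deriv (fun x' => H10 x' x) x =
      deriv u₀ x / 2 - iteratedDeriv 2 u₁ x / 3 - u₁ x ^ 2 / 6) := by
  -- the general iterated-derivative formula for H11
  have ha : ∀ (j : ℕ) (y t : ℝ), iteratedDeriv j (fun x' => H11 x' y) t =
      ∫ u in (0:ℝ)..1, u ^ j * iteratedDeriv j u₁ (y + u * (t - y)) := by
    intro j y t
    have hfe : (fun x' => H11 x' y) = fun x' => ∫ u in (0:ℝ)..1, u₁ (y + u * (x' - y)) :=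
      funext fun x' => hH11 x' y
    rw [hfe, iter_formula u₁ hu₁ y j]
  -- part (a)
  have parta : ∀ (j : ℕ) (x : ℝ),
      iteratedDeriv j (fun x' => H11 x' x) x = iteratedDeriv j u₁ x / ((j : ℝ) + 1) := by
    intro j x
    rw [ha j x x]
    simp only [sub_self, mul_zero, add_zero]
    exact diag_integral _ j
  refine ⟨parta, ?_, ?_⟩
  · -- part (b)
    intro x
    rw [hH10]
    simp only [sub_self, mul_zero, add_zero]
    rw [intervalIntegral.integral_const]
    have h1 : deriv (fun x' => H11 x' x) x = deriv u₁ x / 2 := by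
      have := parta 1 x
      rw [iteratedDeriv_one, iteratedDeriv_one, Nat.cast_one] at this
      rw [this]; norm_num
    rw [hF₀, h1]
    simp
  · -- part (c)
    intro x
    set A : ℕ → ℝ → ℝ := fun k t => ∫ u in (0:ℝ)..1, u ^ k * iteratedDeriv k u₁ (x + u * (t - x))
      with hA
    have hsm : ∀ k : ℕ, ContDiff ℝ (⊤ : ℕ∞) (iteratedDeriv k u₁) := by
      intro k
      rw [iteratedDeriv_eq_iterate]
      exact hu₁.iterate_deriv k
    have hder : ∀ k : ℕ, ∀ t, HasDerivAt (iteratedDeriv k u₁) (iteratedDeriv (k+1) u₁ t) t := by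
      intro k t
      rw [iteratedDeriv_succ]
      exact ((hsm k).differentiable (by simp) t).hasDerivAt
    have hAd : ∀ (k : ℕ) (t : ℝ), HasDerivAt (A k) (A (k+1) t) t := by
      intro k t
      have h := key_hasDerivAt (iteratedDeriv k u₁) (iteratedDeriv (k+1) u₁) (hder k)
        (hsm (k+1)).continuous k x t
      have heq : A (k+1) t = ∫ u in (0:ℝ)..1,
          u ^ k * (u * iteratedDeriv (k+1) u₁ (x + u * (t - x))) := by
        apply intervalIntegral.integral_congr
        intro u _
        simp only [pow_succ]
        ring
      rw [heq]
      exact h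
    have hAc : ∀ k : ℕ, Continuous (A k) := by
      intro k
      have hdk : Differentiable ℝ (A k) := fun t => (hAd k t).differentiableAt
      exact hdk.continuous
    -- identify pieces of F₀ with A's
    have hGeq : ∀ t : ℝ, F₀ t x =
        u₀ t - (t - x) * A 2 t - A 1 t - (t - x) * u₁ t * A 0 t / 3 := by
      intro t
      rw [hF₀]
      have h0 : H11 t x = A 0 t := by
        rw [hH11]
        apply intervalIntegral.integral_congr
        intro u _
        simp
      have h1 : deriv (fun x' => H11 x' x) t = A 1 t := by
        have := ha 1 x t
        rw [iteratedDeriv_one] at this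
        rw [this]
      have h2 : iteratedDeriv 2 (fun x' => H11 x' x) t = A 2 t := ha 2 x t
      rw [h0, h1, h2]
    -- derivative of G := F₀ · x
    set G' : ℝ → ℝ := fun t => deriv u₀ t - (1 * A 2 t + (t - x) * A 3 t) - A 2 t -
      ((1 * u₁ t + (t - x) * deriv u₁ t) * A 0 t + (t - x) * u₁ t * A 1 t) / 3 with hG'
    have hGd : ∀ t, HasDerivAt (fun s => F₀ s x) (G' t) t := by
      intro t
      have hfe : (fun s => F₀ s x) =
          fun s => u₀ s - (s - x) * A 2 s - A 1 s - (s - x) * u₁ s * A 0 s / 3 :=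
        funext hGeq
      rw [hfe]
      have hid : HasDerivAt (fun s : ℝ => s - x) 1 t := (hasDerivAt_id t).sub_const x
      have hu₀d : HasDerivAt u₀ (deriv u₀ t) t := (hu₀.differentiable (by simp) t).hasDerivAt
      have hu₁d : HasDerivAt u₁ (deriv u₁ t) t := (hu₁.differentiable (by simp) t).hasDerivAt
      exact ((hu₀d.sub (hid.mul (hAd 2 t))).sub (hAd 1 t)).sub
        (((hid.mul hu₁d).mul (hAd 0 t)).div_const 3)
    have hGc : Continuous G' := by
      have hc : Continuous (fun t : ℝ => t - x) := continuous_id.sub continuous_const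
      exact (((hu₀.continuous_deriv hle1).sub
        ((continuous_const.mul (hAc 2)).add (hc.mul (hAc 3)))).sub (hAc 2)).sub
        (((((continuous_const.mul hu₁.continuous).add
          (hc.mul (hu₁.continuous_deriv hle1))).mul (hAc 0)).add
          ((hc.mul hu₁.continuous).mul (hAc 1))).div_const 3)
    -- differentiate H10(·, x) under the integral sign
    have hfe : (fun x' => H10 x' x) =
        fun x' => ∫ u in (0:ℝ)..1, u ^ 0 * (fun s => F₀ s x) (x + u * (x' - x)) := by
      funext x'
      rw [hH10]
      apply intervalIntegral.integral_congr
      intro u _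
      simp
    have hd := key_hasDerivAt (fun s => F₀ s x) G' hGd hGc 0 x x
    rw [hfe, hd.deriv]
    simp only [sub_self, mul_zero, add_zero, pow_zero, one_mul]
    rw [intervalIntegral.integral_mul_const, integral_id]
    -- evaluate G' x
    have hAdiag : ∀ k : ℕ, A k x = iteratedDeriv k u₁ x / ((k : ℝ) + 1) := by
      intro k
      rw [hA]
      simp only [sub_self, mul_zero, add_zero]
      exact diag_integral _ k
    rw [hG']
    simp only [sub_self, zero_mul, mul_zero, add_zero, one_mul, zero_add]
    rw [hAdiag 2, hAdiag 0]
    simp only [iteratedDeriv_zero, Nat.cast_ofNat, Nat.cast_zero]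
    ring
end
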